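/- arXiv:2007.00962 — 9 statements merged into one kernel-verified Lean document; each statement's English description precedes it below -/
import Mathlib

section
/- Let p ≥ 2 and let a, b ∈ U_p with a ~ b. Then τ_p(a) = τ_p(b); that is, τ_p is an invariant of the equivalence relation ~. -/
open scoped Classical

/-- Tuples over `ZMod p` of arbitrary length (`U_p` lives among these). -/
abbrev DehnTuple (p : ℕ) := Σ n : ℕ, Fin n → ZMod p

/-- (Op1): cyclic shift `(a_1,…,a_n) → (a_2,…,a_n,a_1)`. -/
def dOp1 {p n : ℕ} (hn : 0 < n) (a : Fin n → ZMod p) : Fin n → ZMod p :=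
  fun i => a ⟨(i.1 + 1) % n, Nat.mod_lt _ hn⟩

/-- (Op2): `(a_1,…,a_n) → (x, a_2+(-1)^2(a_1-x), …, a_n+(-1)^n(a_1-x))`. -/
def dOp2 {p n : ℕ} (hn : 0 < n) (x : ZMod p) (a : Fin n → ZMod p) : Fin n → ZMod p :=
  fun i => a i + (-1 : ZMod p) ^ (i.1 + 1) * (a ⟨0, hn⟩ - x)

/-- (Op3): `(a_1,…,a_n) → (x, a_1-a_2+x, …, a_1-a_n+x)`. -/
def dOp3 {p n : ℕ} (hn : 0 < n) (x : ZMod p) (a : Fin n → ZMod p) : Fin n → ZMod p :=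
  fun i => a ⟨0, hn⟩ - a i + x

/-- (Op4): `(a_1,…,a_n) → (a_1, -a_1+a_2+a_3, a_3, …, a_n)` (needs `n > 2`). -/
def dOp4 {p n : ℕ} (hn : 2 < n) (a : Fin n → ZMod p) : Fin n → ZMod p :=
  fun i => if i.1 = 1 then -a ⟨0, by omega⟩ + a ⟨1, by omega⟩ + a ⟨2, hn⟩ else a i

/-- A single transformation (Op1)–(Op4) on tuples in `U_p`
(tuples of even positive length). -/
inductive DehnStep (p : ℕ) : DehnTuple p → DehnTuple p → Prop
  | op1 {n : ℕ} (hn : 0 < n) (he : Even n) (a : Fin n → ZMod p) :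
      DehnStep p ⟨n, a⟩ ⟨n, dOp1 hn a⟩
  | op2 {n : ℕ} (hn : 0 < n) (he : Even n) (x : ZMod p) (a : Fin n → ZMod p) :
      DehnStep p ⟨n, a⟩ ⟨n, dOp2 hn x a⟩
  | op3 {n : ℕ} (hn : 0 < n) (he : Even n) (x : ZMod p) (a : Fin n → ZMod p) :
      DehnStep p ⟨n, a⟩ ⟨n, dOp3 hn x a⟩
  | op4 {n : ℕ} (hn : 2 < n) (he : Even n) (a : Fin n → ZMod p) :
      DehnStep p ⟨n, a⟩ ⟨n, dOp4 hn a⟩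

/-- `a ~ b`: related by a finite sequence of the transformations (Op1)–(Op4). -/
def DehnEquiv (p : ℕ) : DehnTuple p → DehnTuple p → Prop :=
  Relation.ReflTransGen (DehnStep p)

/-- An `R`-palette for Dehn `p`-colorings: a set of tuples closed under the
operations (i)–(iv). -/
def IsRPalette (p : ℕ) (P : Set (DehnTuple p)) : Prop :=
  (∀ {n : ℕ} (hn : 0 < n) (a : Fin n → ZMod p),
      (⟨n, a⟩ : DehnTuple p) ∈ P → (⟨n, dOp1 hn a⟩ : DehnTuple p) ∈ P) ∧
  (∀ {n : ℕ} (hn : 0 < n) (x : ZMod p) (a : Fin n → ZMod p),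
      (⟨n, a⟩ : DehnTuple p) ∈ P → (⟨n, dOp2 hn x a⟩ : DehnTuple p) ∈ P) ∧
  (∀ {n : ℕ} (hn : 0 < n) (x : ZMod p) (a : Fin n → ZMod p),
      (⟨n, a⟩ : DehnTuple p) ∈ P → (⟨n, dOp3 hn x a⟩ : DehnTuple p) ∈ P) ∧
  (∀ {n : ℕ} (hn : 2 < n) (a : Fin n → ZMod p),
      (⟨n, a⟩ : DehnTuple p) ∈ P → (⟨n, dOp4 hn a⟩ : DehnTuple p) ∈ P)

/-- The alternating set `A_p`: tuples of even positive length of the form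
`(x, y, x, y, …, x, y)`. -/
def altSet (p : ℕ) : Set (DehnTuple p) :=
  {t | 0 < t.1 ∧ Even t.1 ∧
    ∃ x y : ZMod p, ∀ i : Fin t.1, t.2 i = if Even i.1 then x else y}

/-- The cyclic consecutive sums `a_i + a_{i+1}` of integer representatives. -/
def cycS {p n : ℕ} (hn : 0 < n) (a : Fin n → ZMod p) (i : Fin n) : ℕ :=
  (a i).val + (a ⟨(i.1 + 1) % n, Nat.mod_lt _ hn⟩).val

/-- `τ_p(a)`: the largest `k ∈ {1,…,p}` dividing `p` such that all cyclic
consecutive sums are congruent mod `k`. -/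
noncomputable def tauInv (p : ℕ) {n : ℕ} (hn : 0 < n) (a : Fin n → ZMod p) : ℕ :=
  sSup {k : ℕ | 0 < k ∧ k ∣ p ∧ ∀ i j : Fin n, cycS hn a i ≡ cycS hn a j [MOD k]}

/-- `ε_p(a)`: `0` if all cyclic consecutive sums are even, `1` if all are odd,
`∞` otherwise. -/
noncomputable def epsInv (p : ℕ) {n : ℕ} (hn : 0 < n) (a : Fin n → ZMod p) : WithTop ℕ :=
  if ∀ i, Even (cycS hn a i) then 0
  else if ∀ i, Odd (cycS hn a i) then 1
  else ⊤

/-- `μ_p(a) = E(a) - O(a)`. -/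
noncomputable def muInv (p : ℕ) {n : ℕ} (hn : 0 < n) (a : Fin n → ZMod p) : ℤ :=
  ((Finset.univ.filter fun i : Fin n => Even (cycS hn a i)).card : ℤ) -
  ((Finset.univ.filter fun i : Fin n => Odd (cycS hn a i)).card : ℤ)

/-- The reduced tuple `b ∈ (Z_{p/τ})^n` with `b_{2j-1} = (a_{2j-1}-a_1)/τ`,
`b_{2j} = (a_{2j}-a_2)/τ` (differences of integer representatives). -/
noncomputable def reducedTuple (p : ℕ) {n : ℕ} (hn1 : 1 < n) (τ : ℕ) (a : Fin n → ZMod p) :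
    Fin n → ZMod (p / τ) :=
  fun i =>
    (((((a i).val : ℤ) -
        (if Even i.1 then ((a ⟨0, by omega⟩).val : ℤ) else ((a ⟨1, hn1⟩).val : ℤ))) /
      (τ : ℤ) : ℤ) : ZMod (p / τ))

/-- `μ_{p,τ}(a)`: `|μ_{p/τ}(b)|` if `τ_p(a) = τ`, and `∞` otherwise. -/
noncomputable def muTauInv (p : ℕ) {n : ℕ} (hn1 : 1 < n) (τ : ℕ) (a : Fin n → ZMod p) :
    WithTop ℤ :=
  if tauInv p (by omega) a = τ then
    ((|muInv (p / τ) (by omega) (reducedTuple p hn1 τ a)| : ℤ) : WithTop ℤ)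
  else ⊤

/-- The entry at (0-indexed) position `k` of the canonical tuple
`(0, 0, τ, -τ, 2τ, -2τ, …)`. -/
def pairPat (p τ k : ℕ) : ZMod p :=
  if Even k then ((k / 2 : ℕ) : ZMod p) * (τ : ZMod p)
  else -(((k / 2 : ℕ) : ZMod p) * (τ : ZMod p))

/-- The alternating sum `Σ_{i=1}^n (-1)^i x_i` in `ZMod p`. -/
def altSum (p n : ℕ) (x : Fin n → ZMod p) : ZMod p :=
  ∑ i : Fin n, (-1 : ZMod p) ^ (i.1 + 1) * x i

/-- `T_{R→A}(a_1,…,a_n) = (a_1+a_2, a_2+a_3, …, a_{n-1}+a_n, a_n+a_1)`. -/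
def traMap (p : ℕ) {n : ℕ} (hn : 0 < n) (a : Fin n → ZMod p) : Fin n → ZMod p :=
  fun i => a i + a ⟨(i.1 + 1) % n, Nat.mod_lt _ hn⟩

/-- `T_{A→R}(x_1,…,x_n) = (0, c_2, …, c_n)`, `c_j = Σ_{i=1}^{j-1} (-1)^{i+(j-1)} x_i`. -/
def tarMap (p n : ℕ) (x : Fin n → ZMod p) : Fin n → ZMod p :=
  fun k => ∑ i : Fin n, if i.1 < k.1 then (-1 : ZMod p) ^ (i.1 + k.1 + 1) * x i else 0

/-- A single transformation (Op1)^A–(Op3)^A on arc-color tuples. -/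
inductive AStep (p n : ℕ) : (Fin n → ZMod p) → (Fin n → ZMod p) → Prop
  | op1 (hn : 0 < n) (x : Fin n → ZMod p) :
      AStep p n x (fun i => x ⟨(i.1 + 1) % n, Nat.mod_lt _ hn⟩)
  | op2 (c : ZMod p) (x : Fin n → ZMod p) :
      AStep p n x (fun i => 2 * c - x i)
  | op3 (hn : 1 < n) (x : Fin n → ZMod p) :
      AStep p n x (fun i =>
        if i.1 = 0 then x ⟨1, hn⟩
        else if i.1 = 1 then 2 * x ⟨1, hn⟩ - x ⟨0, by omega⟩
        else x i)

/-- `x ~^A y`: related by a finite sequence of (Op1)^A–(Op3)^A. -/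
def AEquiv (p n : ℕ) : (Fin n → ZMod p) → (Fin n → ZMod p) → Prop :=
  Relation.ReflTransGen (AStep p n)

/-- `τ_p^A(x)`: the largest `k ∈ {1,…,p}` dividing `p` with all entries
congruent mod `k`. -/
noncomputable def tauA (p n : ℕ) (x : Fin n → ZMod p) : ℕ :=
  sSup {k : ℕ | 0 < k ∧ k ∣ p ∧ ∀ i j : Fin n, (x i).val ≡ (x j).val [MOD k]}
section TauAux

variable {p : ℕ}

private lemma neg_one_pow_mod' {R : Type*} [Monoid R] [HasDistribNeg R] {n : ℕ} (hne : Even n)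
    (m : ℕ) : ((-1 : R)) ^ (m % n) = (-1) ^ m := by
  conv_rhs => rw [← Nat.div_add_mod m n]
  rw [pow_add, pow_mul, hne.neg_one_pow, one_pow, one_mul]

private lemma sigma_surj' {n : ℕ} (hn : 0 < n) :
    Function.Surjective (fun i : Fin n => (⟨(i.1 + 1) % n, Nat.mod_lt _ hn⟩ : Fin n)) := by
  intro j
  refine ⟨⟨(j.1 + n - 1) % n, Nat.mod_lt _ hn⟩, ?_⟩
  ext
  simp only
  rw [Nat.mod_add_mod]
  have h1 : j.1 + n - 1 + 1 = j.1 + n := by omega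
  rw [h1, Nat.add_mod_right, Nat.mod_eq_of_lt j.2]

private lemma traMap_dOp1' {n : ℕ} (hn : 0 < n) (a : Fin n → ZMod p) (i : Fin n) :
    traMap p hn (dOp1 hn a) i = traMap p hn a ⟨(i.1 + 1) % n, Nat.mod_lt _ hn⟩ := rfl

private lemma traMap_dOp2' {n : ℕ} (hn : 0 < n) (hne : Even n) (x : ZMod p)
    (a : Fin n → ZMod p) (i : Fin n) :
    traMap p hn (dOp2 hn x a) i = traMap p hn a i := by
  simp only [traMap, dOp2]
  have h1 : (-1 : ZMod p) ^ ((i.1 + 1) % n + 1) = (-1 : ZMod p) ^ (i.1 + 1) * (-1) := by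
    rw [pow_succ, neg_one_pow_mod' hne]
  rw [h1]; ring

private lemma traMap_dOp3' {n : ℕ} (hn : 0 < n) (x : ZMod p) (a : Fin n → ZMod p) (i : Fin n) :
    traMap p hn (dOp3 hn x a) i = 2 * (a ⟨0, hn⟩ + x) - traMap p hn a i := by
  simp only [traMap, dOp3]; ring

private lemma traMap_dOp4' {n : ℕ} (hn : 2 < n) (hn0 : 0 < n) (a : Fin n → ZMod p) (i : Fin n) :
    traMap p hn0 (dOp4 hn a) i =
      if i.1 = 0 then traMap p hn0 a ⟨1, by omega⟩
      else if i.1 = 1 then 2 * traMap p hn0 a ⟨1, by omega⟩ - traMap p hn0 a ⟨0, hn0⟩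
      else traMap p hn0 a i := by
  have h1 : (1 : ℕ) % n = 1 := Nat.mod_eq_of_lt (by omega)
  have h2 : (2 : ℕ) % n = 2 := Nat.mod_eq_of_lt hn
  by_cases e0 : i.1 = 0
  · have : i = ⟨0, hn0⟩ := Fin.ext e0
    subst this
    simp only [traMap, dOp4, if_pos, e0]
    simp only [Nat.zero_add, h1, h2]
    norm_num
    ring
  · by_cases e1 : i.1 = 1
    · have hi : i = ⟨1, by omega⟩ := Fin.ext e1
      rw [hi]
      simp only [traMap, dOp4, h1, h2]
      norm_num
      ring
    · have hnext : (i.1 + 1) % n ≠ 1 := by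
        rcases Nat.lt_or_ge (i.1 + 1) n with h | h
        · rw [Nat.mod_eq_of_lt h]; omega
        · have : i.1 + 1 = n := by omega
          rw [this, Nat.mod_self]; omega
      simp only [traMap, dOp4, if_neg e1, if_neg hnext, if_neg e0]

private lemma cond_cast' {k : ℕ} (hk : k ∣ p) [NeZero p] {n : ℕ} (hn : 0 < n)
    (a : Fin n → ZMod p) :
    (∀ i j : Fin n, cycS hn a i ≡ cycS hn a j [MOD k]) ↔
      (∀ i j : Fin n, ZMod.castHom hk (ZMod k) (traMap p hn a i) =
        ZMod.castHom hk (ZMod k) (traMap p hn a j)) := by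
  refine forall_congr' fun i => forall_congr' fun j => ?_
  rw [← ZMod.natCast_eq_natCast_iff]
  simp only [cycS, traMap, Nat.cast_add, map_add, ZMod.castHom_apply, ZMod.natCast_val]

private lemma allEq_comp_surj' {α γ : Type*} {σ : α → α} (hσ : Function.Surjective σ)
    (c : α → γ) : (∀ i j, c (σ i) = c (σ j)) ↔ (∀ i j, c i = c j) := by
  constructor
  · intro h i j
    obtain ⟨i', rfl⟩ := hσ i
    obtain ⟨j', rfl⟩ := hσ j
    exact h i' j'
  · intro h i j; exact h _ _

private lemma allEq_op4' {X : Type*} [CommRing X] {n : ℕ} (hn : 2 < n)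
    (c c' : Fin n → X)
    (h0 : c' ⟨0, by omega⟩ = c ⟨1, by omega⟩)
    (h1 : c' ⟨1, by omega⟩ = 2 * c ⟨1, by omega⟩ - c ⟨0, by omega⟩)
    (hrest : ∀ i : Fin n, i.1 ≠ 0 → i.1 ≠ 1 → c' i = c i) :
    (∀ i j, c' i = c' j) ↔ (∀ i j, c i = c j) := by
  set i0 : Fin n := ⟨0, by omega⟩
  set i1 : Fin n := ⟨1, by omega⟩
  constructor
  · intro h
    have key01 : c i0 = c i1 := by
      have e := h i1 i0
      rw [h0, h1] at e
      linear_combination -e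
    have key : ∀ i, c i = c i1 := by
      intro i
      by_cases e0 : i.1 = 0
      · have : i = i0 := Fin.ext e0
        rw [this, key01]
      · by_cases e1 : i.1 = 1
        · have : i = i1 := Fin.ext e1
          rw [this]
        · rw [← hrest i e0 e1, h i i0, h0]
    intro i j; rw [key i, key j]
  · intro h
    have key : ∀ i, c' i = c i1 := by
      intro i
      by_cases e0 : i.1 = 0
      · have : i = i0 := Fin.ext e0
        rw [this, h0]
      · by_cases e1 : i.1 = 1
        · have : i = i1 := Fin.ext e1
          rw [this, h1, h i0 i1]; ring
        · rw [hrest i e0 e1]; exact h i i1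
    intro i j; rw [key i, key j]

private lemma tauInv_dehnStep (hp : p ≠ 0) {s t : DehnTuple p} (h : DehnStep p s t)
    (hs : 0 < s.1) (ht : 0 < t.1) : tauInv p hs s.2 = tauInv p ht t.2 := by
  haveI : NeZero p := ⟨hp⟩
  cases h with
  | op1 hn he a =>
    unfold tauInv
    congr 1
    ext k
    simp only [Set.mem_setOf_eq]
    refine and_congr_right fun hk0 => and_congr_right fun hkp => ?_
    rw [cond_cast' hkp hn, cond_cast' hkp hn]
    simp only [traMap_dOp1']
    exact (allEq_comp_surj' (sigma_surj' hn)
      fun i => ZMod.castHom hkp (ZMod k) (traMap p hn a i)).symm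
  | op2 hn he x a =>
    unfold tauInv
    congr 1
    ext k
    simp only [Set.mem_setOf_eq]
    refine and_congr_right fun hk0 => and_congr_right fun hkp => ?_
    rw [cond_cast' hkp hn, cond_cast' hkp hn]
    simp only [traMap_dOp2' hn he x a]
  | op3 hn he x a =>
    unfold tauInv
    congr 1
    ext k
    simp only [Set.mem_setOf_eq]
    refine and_congr_right fun hk0 => and_congr_right fun hkp => ?_
    rw [cond_cast' hkp hn, cond_cast' hkp hn]
    simp only [traMap_dOp3', map_sub, sub_right_inj]
  | op4 hn he a =>
    have hn0 := lt_trans Nat.zero_lt_two hn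
    unfold tauInv
    congr 1
    ext k
    simp only [Set.mem_setOf_eq]
    refine and_congr_right fun hk0 => and_congr_right fun hkp => ?_
    rw [cond_cast' hkp hn0, cond_cast' hkp hn0]
    refine (allEq_op4' hn _ _ ?_ ?_ ?_).symm
    · rw [traMap_dOp4' hn hn0 a ⟨0, by omega⟩]; simp
    · rw [traMap_dOp4' hn hn0 a ⟨1, by omega⟩, if_neg (by norm_num), if_pos rfl,
        map_sub, map_mul, map_ofNat]
    · intro i e0 e1
      rw [traMap_dOp4' hn hn0 a i, if_neg e0, if_neg e1]

noncomputable def tauTotal (p : ℕ) (t : DehnTuple p) : ℕ :=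
  if h : 0 < t.1 then tauInv p h t.2 else 0

private lemma tauTotal_step (hp : p ≠ 0) {s t : DehnTuple p} (h : DehnStep p s t) :
    tauTotal p s = tauTotal p t := by
  have hs : 0 < s.1 := by
    cases h with
    | op1 hn he a => exact hn
    | op2 hn he x a => exact hn
    | op3 hn he x a => exact hn
    | op4 hn he a => exact lt_trans Nat.zero_lt_two hn
  have ht : 0 < t.1 := by
    cases h with
    | op1 hn he a => exact hn
    | op2 hn he x a => exact hn
    | op3 hn he x a => exact hn
    | op4 hn he a => exact lt_trans Nat.zero_lt_two hn
  rw [tauTotal, tauTotal, dif_pos hs, dif_pos ht]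
  exact tauInv_dehnStep hp h hs ht

end TauAux

/-- `τ_p` is an invariant of `~`. -/
theorem tauInv_invariant (p : ℕ) (hp : 2 ≤ p) (m n : ℕ)
    (hm : 0 < m) (hme : Even m) (hn : 0 < n) (hne : Even n)
    (a : Fin m → ZMod p) (b : Fin n → ZMod p)
    (h : DehnEquiv p ⟨m, a⟩ ⟨n, b⟩) :
    tauInv p hm a = tauInv p hn b := by
  have hp0 : p ≠ 0 := by omega
  have key : ∀ t : DehnTuple p, DehnEquiv p ⟨m, a⟩ t → tauTotal p ⟨m, a⟩ = tauTotal p t := by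
    intro t ht
    induction ht with
    | refl => rfl
    | tail _ step ih => exact ih.trans (tauTotal_step hp0 step)
  have key2 := key ⟨n, b⟩ h
  rwa [tauTotal, tauTotal, dif_pos hm, dif_pos hn] at key2
end

section
/- Let p ≥ 2 be even and let a, b ∈ U_p with a ~ b. Then ε_p(a) = ε_p(b); that is, ε_p is an invariant of the equivalence relation ~. -/
open scoped Classical

section EpsAux

variable {p : ℕ}

/-- The cyclic successor map on indices. -/
private def sigF {n : ℕ} (hn : 0 < n) (i : Fin n) : Fin n :=
  ⟨(i.1 + 1) % n, Nat.mod_lt _ hn⟩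

private lemma sigF_surj {n : ℕ} (hn : 0 < n) : Function.Surjective (sigF hn) := by
  intro j
  by_cases h0 : j.1 = 0
  · refine ⟨⟨n - 1, by omega⟩, ?_⟩
    apply Fin.ext
    simp only [sigF]
    have : n - 1 + 1 = n := by omega
    rw [this, Nat.mod_self, h0]
  · refine ⟨⟨j.1 - 1, by omega⟩, ?_⟩
    apply Fin.ext
    simp only [sigF]
    have : j.1 - 1 + 1 = j.1 := by omega
    rw [this, Nat.mod_eq_of_lt j.2]

/-- The `ZMod 2`-valued parity of the cyclic sum. -/
private noncomputable def gfun (hp2 : (2:ℕ) ∣ p) {n : ℕ} (hn : 0 < n)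
    (a : Fin n → ZMod p) (i : Fin n) : ZMod 2 :=
  ZMod.castHom hp2 (ZMod 2) (a i + a (sigF hn i))

private lemma natCast_cycS (hp0 : p ≠ 0) (hp2 : (2:ℕ) ∣ p) {n : ℕ} (hn : 0 < n)
    (a : Fin n → ZMod p) (i : Fin n) :
    ((cycS hn a i : ℕ) : ZMod 2) = gfun hp2 hn a i := by
  haveI : NeZero p := ⟨hp0⟩
  show (((a i).val + (a (sigF hn i)).val : ℕ) : ZMod 2) = _
  rw [Nat.cast_add, gfun, map_add]
  simp [ZMod.natCast_val]

private lemma even_iff_gfun (hp0 : p ≠ 0) (hp2 : (2:ℕ) ∣ p) {n : ℕ} (hn : 0 < n)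
    (a : Fin n → ZMod p) (i : Fin n) :
    Even (cycS hn a i) ↔ gfun hp2 hn a i = 0 := by
  rw [← natCast_cycS hp0 hp2 hn a i, ZMod.natCast_eq_zero_iff]
  exact even_iff_two_dvd

private lemma odd_iff_gfun (hp0 : p ≠ 0) (hp2 : (2:ℕ) ∣ p) {n : ℕ} (hn : 0 < n)
    (a : Fin n → ZMod p) (i : Fin n) :
    Odd (cycS hn a i) ↔ gfun hp2 hn a i = 1 := by
  rw [← Nat.not_even_iff_odd, even_iff_gfun hp0 hp2 hn a i]
  have : ∀ x : ZMod 2, ¬ x = 0 ↔ x = 1 := by decide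
  exact this _

private lemma epsInv_eq_of_gfun (hp0 : p ≠ 0) (hp2 : (2:ℕ) ∣ p) {m n : ℕ}
    (hm : 0 < m) (hn : 0 < n) (a : Fin m → ZMod p) (b : Fin n → ZMod p)
    (h : ∀ v : ZMod 2, (∀ i, gfun hp2 hm a i = v) ↔ (∀ j, gfun hp2 hn b j = v)) :
    epsInv p hm a = epsInv p hn b := by
  have h0 : (∀ i, Even (cycS hm a i)) ↔ (∀ j, Even (cycS hn b j)) := by
    simp only [even_iff_gfun hp0 hp2]; exact h 0
  have h1 : (∀ i, Odd (cycS hm a i)) ↔ (∀ j, Odd (cycS hn b j)) := by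
    simp only [odd_iff_gfun hp0 hp2]; exact h 1
  unfold epsInv
  by_cases H0 : ∀ i, Even (cycS hm a i)
  · rw [if_pos H0, if_pos (h0.mp H0)]
  · rw [if_neg H0, if_neg (fun H => H0 (h0.mpr H))]
    by_cases H1 : ∀ i, Odd (cycS hm a i)
    · rw [if_pos H1, if_pos (h1.mp H1)]
    · rw [if_neg H1, if_neg (fun H => H1 (h1.mpr H))]

private lemma forall_eq_iff_of_exists {n m : ℕ} (g : Fin n → ZMod 2) (g' : Fin m → ZMod 2)
    (h1 : ∀ i, ∃ j, g' i = g j) (h2 : ∀ j, ∃ i, g j = g' i) (v : ZMod 2) :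
    (∀ i, g i = v) ↔ (∀ j, g' j = v) := by
  constructor
  · intro h i; obtain ⟨j, hj⟩ := h1 i; rw [hj]; exact h j
  · intro h j; obtain ⟨i, hi⟩ := h2 j; rw [hi]; exact h i

private lemma gfun_op1 (hp2 : (2:ℕ) ∣ p) {n : ℕ} (hn : 0 < n) (a : Fin n → ZMod p)
    (i : Fin n) : gfun hp2 hn (dOp1 hn a) i = gfun hp2 hn a (sigF hn i) := rfl

private lemma sum_op2 {n : ℕ} (hn : 0 < n) (he : Even n) (x : ZMod p) (a : Fin n → ZMod p)
    (i : Fin n) :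
    dOp2 hn x a i + dOp2 hn x a (sigF hn i) = a i + a (sigF hn i) := by
  unfold dOp2 sigF
  have key : (-1 : ZMod p) ^ (i.1 + 1) + (-1 : ZMod p) ^ ((i.1 + 1) % n + 1) = 0 := by
    rcases Nat.lt_or_ge (i.1 + 1) n with hlt | hge
    · rw [Nat.mod_eq_of_lt hlt, pow_succ]
      ring
    · have : i.1 + 1 = n := by omega
      rw [this, Nat.mod_self, he.neg_one_pow]
      norm_num
    
  have : a i + (-1 : ZMod p) ^ (i.1 + 1) * (a ⟨0, hn⟩ - x) +
      (a ⟨(i.1 + 1) % n, Nat.mod_lt _ hn⟩ +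
        (-1 : ZMod p) ^ ((i.1 + 1) % n + 1) * (a ⟨0, hn⟩ - x)) =
      a i + a ⟨(i.1 + 1) % n, Nat.mod_lt _ hn⟩ +
        ((-1 : ZMod p) ^ (i.1 + 1) + (-1 : ZMod p) ^ ((i.1 + 1) % n + 1)) *
          (a ⟨0, hn⟩ - x) := by ring
  rw [this, key, zero_mul, add_zero]

private lemma gfun_op3 (hp2 : (2:ℕ) ∣ p) {n : ℕ} (hn : 0 < n) (x : ZMod p)
    (a : Fin n → ZMod p) (i : Fin n) :
    gfun hp2 hn (dOp3 hn x a) i = gfun hp2 hn a i := by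
  unfold gfun
  have hsum : dOp3 hn x a i + dOp3 hn x a (sigF hn i) =
      2 * (a ⟨0, hn⟩ + x) - (a i + a (sigF hn i)) := by
    unfold dOp3; ring
  rw [hsum, map_sub, map_mul, map_ofNat]
  have : ∀ y z : ZMod 2, 2 * y - z = z := by decide
  exact this _ _

private lemma gfun_op4 (hp2 : (2:ℕ) ∣ p) {n : ℕ} (hn2 : 2 < n) (a : Fin n → ZMod p) :
    ∀ i : Fin n,
      gfun hp2 (by omega) (dOp4 hn2 a) i =
        if i.1 = 0 then gfun hp2 (by omega) a ⟨1, by omega⟩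
        else if i.1 = 1 then gfun hp2 (by omega) a ⟨0, by omega⟩
        else gfun hp2 (by omega) a i := by
  intro i
  have hn : 0 < n := by omega
  obtain ⟨iv, hlt⟩ := i
  by_cases h0 : iv = 0
  · subst h0
    rw [if_pos rfl]
    unfold gfun sigF dOp4
    simp only
    have e1 : (0 + 1) % n = 1 := Nat.mod_eq_of_lt (by omega)
    have e2 : (1 + 1) % n = 2 := Nat.mod_eq_of_lt (by omega)
    simp only [e1, e2]
    norm_num
    ring_nf
  · rw [if_neg h0]
    by_cases h1 : iv = 1
    · subst h1
      rw [if_pos rfl]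
      unfold gfun sigF dOp4
      simp only
      have e1 : (1 + 1) % n = 2 := Nat.mod_eq_of_lt (by omega)
      have e2 : (0 + 1) % n = 1 := Nat.mod_eq_of_lt (by omega)
      simp only [e1, e2, reduceIte]
      have key2 : ∀ u v w : ZMod p, ZMod.castHom hp2 (ZMod 2) (-u + v + w + w) =
          ZMod.castHom hp2 (ZMod 2) (u + v) := by
        intro u v w
        have h2 : -u + v + w + w = u + v + 2 * (w - u) := by ring
        rw [h2, map_add, map_mul, map_ofNat]
        have h3 : ∀ y z : ZMod 2, y + 2 * z = y := by decide
        exact h3 _ _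
      exact key2 _ _ _
    · rw [if_neg h1]
      unfold gfun sigF dOp4
      have hv2 : 2 ≤ iv := by omega
      have hs1 : (iv + 1) % n ≠ 1 := by
        rcases Nat.lt_or_ge (iv + 1) n with hlt2 | hge
        · rw [Nat.mod_eq_of_lt hlt2]; omega
        · have : iv + 1 = n := by omega
          rw [this, Nat.mod_self]; omega
      simp only [if_neg h1, if_neg hs1]

private lemma dehnStep_pos {s t : DehnTuple p} (h : DehnStep p s t) :
    0 < s.1 ∧ 0 < t.1 := by
  cases h with
  | op1 hn he a => exact ⟨hn, hn⟩
  | op2 hn he x a => exact ⟨hn, hn⟩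
  | op3 hn he x a => exact ⟨hn, hn⟩
  | op4 hn he a => exact ⟨Nat.zero_lt_of_lt hn, Nat.zero_lt_of_lt hn⟩

private lemma epsInv_step (hp0 : p ≠ 0) (hp2 : (2:ℕ) ∣ p) {s t : DehnTuple p}
    (h : DehnStep p s t) (hs : 0 < s.1) (ht : 0 < t.1) :
    epsInv p hs s.2 = epsInv p ht t.2 := by
  cases h with
  | @op1 n hn he a =>
      refine epsInv_eq_of_gfun hp0 hp2 hn hn a (dOp1 hn a) ?_
      intro v
      refine forall_eq_iff_of_exists _ _ ?_ ?_ v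
      · intro i; exact ⟨sigF hn i, gfun_op1 hp2 hn a i⟩
      · intro j
        obtain ⟨i, hi⟩ := sigF_surj hn j
        exact ⟨i, by rw [gfun_op1 hp2 hn a i, hi]⟩
  | @op2 n hn he x a =>
      refine epsInv_eq_of_gfun hp0 hp2 hn hn a (dOp2 hn x a) ?_
      intro v
      have : ∀ i, gfun hp2 hn (dOp2 hn x a) i = gfun hp2 hn a i := by
        intro i; unfold gfun; rw [sum_op2 hn he x a i]
      simp only [this]
  | @op3 n hn he x a =>
      refine epsInv_eq_of_gfun hp0 hp2 hn hn a (dOp3 hn x a) ?_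
      intro v
      simp only [gfun_op3 hp2 hn x a]
  | @op4 n hn2 he a =>
      refine epsInv_eq_of_gfun hp0 hp2 (show 0 < n by omega) (show 0 < n by omega) a (dOp4 hn2 a) ?_
      intro v
      refine forall_eq_iff_of_exists _ _ ?_ ?_ v
      · intro i
        by_cases h0 : i.1 = 0
        · exact ⟨⟨1, by omega⟩, by rw [gfun_op4 hp2 hn2 a i, if_pos h0]⟩
        · by_cases h1 : i.1 = 1
          · exact ⟨⟨0, by omega⟩, by rw [gfun_op4 hp2 hn2 a i, if_neg h0, if_pos h1]⟩
          · exact ⟨i, by rw [gfun_op4 hp2 hn2 a i, if_neg h0, if_neg h1]⟩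
      · intro j
        by_cases h0 : j.1 = 0
        · refine ⟨⟨1, by omega⟩, ?_⟩
          rw [gfun_op4 hp2 hn2 a ⟨1, by omega⟩]
          simp only [if_neg (by omega : ¬ (1:ℕ) = 0), if_pos rfl]
          congr 1
          exact Fin.ext h0
        · by_cases h1 : j.1 = 1
          · refine ⟨⟨0, by omega⟩, ?_⟩
            rw [gfun_op4 hp2 hn2 a ⟨0, by omega⟩]
            simp only [if_pos rfl]
            congr 1
            exact Fin.ext h1
          · exact ⟨j, by rw [gfun_op4 hp2 hn2 a j, if_neg h0, if_neg h1]⟩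

end EpsAux

/-- for even `p`, `ε_p` is an invariant of `~`. -/
theorem epsInv_invariant (p : ℕ) (hp : 2 ≤ p) (hpe : Even p) (m n : ℕ)
    (hm : 0 < m) (hme : Even m) (hn : 0 < n) (hne : Even n)
    (a : Fin m → ZMod p) (b : Fin n → ZMod p)
    (h : DehnEquiv p ⟨m, a⟩ ⟨n, b⟩) :
    epsInv p hm a = epsInv p hn b := by
  have hp0 : p ≠ 0 := by omega
  have hp2 : (2:ℕ) ∣ p := hpe.two_dvd
  have key : ∀ t : DehnTuple p, DehnEquiv p ⟨m, a⟩ t →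
      ∀ ht : 0 < t.1, epsInv p hm a = epsInv p ht t.2 := by
    intro t hequiv
    induction hequiv with
    | refl => intro _; rfl
    | tail _ hstep ih =>
        intro ht
        have hs := (dehnStep_pos hstep).1
        exact (ih hs).trans (epsInv_step hp0 hp2 hstep hs ht)
  exact key ⟨n, b⟩ h hn
end

section
/- Let p ≥ 2 be even and let a, b ∈ U_p with a ~ b. Then μ_p(a) = μ_p(b); that is, μ_p is an invariant of the equivalence relation ~. -/
open scoped Classical

section MuAux

private lemma parity_iff {p : ℕ} [NeZero p] (hp2 : 2 ∣ p) {n : ℕ} (hn : 0 < n)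
    (a : Fin n → ZMod p) (i : Fin n) :
    Even (cycS hn a i) ↔ ZMod.castHom hp2 (ZMod 2) (traMap p hn a i) = 0 := by
  have h1 : traMap p hn a i = ((cycS hn a i : ℕ) : ZMod p) := by
    simp [traMap, cycS, Nat.cast_add, ZMod.natCast_val, ZMod.cast_id]
  rw [h1, map_natCast, ZMod.natCast_eq_zero_iff]
  exact even_iff_two_dvd

private lemma muInv_eq_card (p : ℕ) {n : ℕ} (hn : 0 < n) (a : Fin n → ZMod p) :
    muInv p hn a =
      2 * ((Finset.univ.filter fun i : Fin n => Even (cycS hn a i)).card : ℤ) - n := by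
  unfold muInv
  have h1 : (Finset.univ.filter fun i : Fin n => Odd (cycS hn a i)) =
      Finset.univ \ (Finset.univ.filter fun i : Fin n => Even (cycS hn a i)) := by
    rw [← Finset.filter_not]
    exact Finset.filter_congr fun i _ => (Nat.not_even_iff_odd).symm
  have hle : (Finset.univ.filter fun i : Fin n => Even (cycS hn a i)).card ≤ n := by
    simpa using Finset.card_filter_le Finset.univ (fun i : Fin n => Even (cycS hn a i))
  rw [h1, Finset.card_sdiff_of_subset (Finset.filter_subset _ _), Finset.card_univ, Fintype.card_fin,
    Nat.cast_sub hle]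
  ring

private lemma muInv_congr (p : ℕ) {n : ℕ} (hn : 0 < n) (a b : Fin n → ZMod p)
    (h : ∀ i, Even (cycS hn a i) ↔ Even (cycS hn b i)) :
    muInv p hn a = muInv p hn b := by
  rw [muInv_eq_card, muInv_eq_card]
  have : (Finset.univ.filter fun i : Fin n => Even (cycS hn a i)) =
      (Finset.univ.filter fun i : Fin n => Even (cycS hn b i)) :=
    Finset.filter_congr fun i _ => by simp only [h i]
  rw [this]

private lemma traMap_apply (p : ℕ) {n : ℕ} (hn : 0 < n) (a : Fin n → ZMod p) (i : Fin n) :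
    traMap p hn a i = a i + a ⟨(i.1 + 1) % n, Nat.mod_lt _ hn⟩ := rfl

private lemma op2_parity {p : ℕ} [NeZero p] (hp2 : 2 ∣ p) {n : ℕ} (hn : 0 < n)
    (x : ZMod p) (a : Fin n → ZMod p) (i : Fin n) :
    Even (cycS hn (dOp2 hn x a) i) ↔ Even (cycS hn a i) := by
  rw [parity_iff hp2, parity_iff hp2]
  have h2 : (2 : ZMod 2) = 0 := by decide
  have key : ZMod.castHom hp2 (ZMod 2) (traMap p hn (dOp2 hn x a) i) =
      ZMod.castHom hp2 (ZMod 2) (traMap p hn a i) := by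
    set phi := ZMod.castHom hp2 (ZMod 2) with hphi
    simp only [traMap, dOp2, map_add, map_mul, map_pow, map_neg, map_one, map_sub]
    have hneg : (-(1 : ZMod 2)) = 1 := by decide
    rw [hneg]
    simp only [one_pow]
    linear_combination (phi (a ⟨0, hn⟩) - phi x) * h2
  rw [key]

private lemma op3_parity {p : ℕ} [NeZero p] (hp2 : 2 ∣ p) {n : ℕ} (hn : 0 < n)
    (x : ZMod p) (a : Fin n → ZMod p) (i : Fin n) :
    Even (cycS hn (dOp3 hn x a) i) ↔ Even (cycS hn a i) := by
  rw [parity_iff hp2, parity_iff hp2]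
  have h2 : (2 : ZMod 2) = 0 := by decide
  have key : ZMod.castHom hp2 (ZMod 2) (traMap p hn (dOp3 hn x a) i) =
      ZMod.castHom hp2 (ZMod 2) (traMap p hn a i) := by
    set phi := ZMod.castHom hp2 (ZMod 2) with hphi
    simp only [traMap, dOp3, map_add, map_sub]
    linear_combination (phi (a ⟨0, hn⟩) + phi x - phi (a i)
      - phi (a ⟨(i.1 + 1) % n, Nat.mod_lt _ hn⟩)) * h2
  rw [key]

private lemma op1_card (p : ℕ) {n : ℕ} (hn : 0 < n) (a : Fin n → ZMod p) :
    (Finset.univ.filter fun i : Fin n => Even (cycS hn (dOp1 hn a) i)).card =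
    (Finset.univ.filter fun i : Fin n => Even (cycS hn a i)).card := by
  have hmod1 : ∀ j : Fin n, (((j.1 + (n - 1)) % n) + 1) % n = j.1 := by
    intro j
    rw [Nat.mod_add_mod, show j.1 + (n - 1) + 1 = j.1 + n by omega,
      Nat.add_mod_right, Nat.mod_eq_of_lt j.2]
  have hmod2 : ∀ j : Fin n, (((j.1 + 1) % n) + (n - 1)) % n = j.1 := by
    intro j
    rw [Nat.mod_add_mod, show j.1 + 1 + (n - 1) = j.1 + n by omega,
      Nat.add_mod_right, Nat.mod_eq_of_lt j.2]
  have key : ∀ i : Fin n, cycS hn (dOp1 hn a) i =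
      cycS hn a ⟨(i.1 + 1) % n, Nat.mod_lt _ hn⟩ := fun i => rfl
  let e : Fin n ≃ Fin n :=
    { toFun := fun i => ⟨(i.1 + 1) % n, Nat.mod_lt _ hn⟩
      invFun := fun j => ⟨(j.1 + (n - 1)) % n, Nat.mod_lt _ hn⟩
      left_inv := fun i => Fin.ext (hmod2 i)
      right_inv := fun j => Fin.ext (hmod1 j) }
  refine Finset.card_equiv e fun i => ?_
  simp only [Finset.mem_filter, Finset.mem_univ, true_and, key i]
  rfl

private lemma op4_parity {p : ℕ} [NeZero p] (hp2 : 2 ∣ p) {n : ℕ} (hn3 : 2 < n)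
    (hn : 0 < n) (a : Fin n → ZMod p) (i : Fin n) :
    Even (cycS hn (dOp4 hn3 a) i) ↔ Even (cycS hn a
      (if i.1 = 0 then ⟨1, by omega⟩ else if i.1 = 1 then ⟨0, by omega⟩ else i)) := by
  have h2 : (2 : ZMod 2) = 0 := by decide
  rw [parity_iff hp2, parity_iff hp2]
  set phi := ZMod.castHom hp2 (ZMod 2) with hphi
  have b0 : dOp4 hn3 a ⟨0, hn⟩ = a ⟨0, hn⟩ := by simp [dOp4]
  have b1 : dOp4 hn3 a ⟨1, by omega⟩ =
      -a ⟨0, by omega⟩ + a ⟨1, by omega⟩ + a ⟨2, hn3⟩ := by simp [dOp4]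
  have key : phi (traMap p hn (dOp4 hn3 a) i) = phi (traMap p hn a
      (if i.1 = 0 then ⟨1, by omega⟩ else if i.1 = 1 then ⟨0, by omega⟩ else i)) := by
    by_cases h0 : i.1 = 0
    · have hi : i = ⟨0, hn⟩ := Fin.ext h0
      subst hi
      rw [if_pos rfl, traMap_apply, traMap_apply]
      have f1 : (⟨((⟨0, hn⟩ : Fin n).1 + 1) % n, Nat.mod_lt _ hn⟩ : Fin n)
          = ⟨1, by omega⟩ := Fin.ext (by simp [Nat.mod_eq_of_lt (show 1 < n by omega)])
      have f2 : (⟨((⟨1, (by omega : 1 < n)⟩ : Fin n).1 + 1) % n, Nat.mod_lt _ hn⟩ : Fin n)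
          = ⟨2, hn3⟩ := Fin.ext (by simp [Nat.mod_eq_of_lt hn3])
      rw [f1, f2, b0, b1]
      ring_nf
    · by_cases h1 : i.1 = 1
      · have hi : i = ⟨1, Nat.lt_of_succ_lt hn3⟩ := Fin.ext h1
        subst hi
        rw [if_neg (by simp), if_pos rfl, traMap_apply, traMap_apply]
        have f2 : (⟨((⟨1, (by omega : (1:ℕ) < n)⟩ : Fin n).1 + 1) % n, Nat.mod_lt _ hn⟩ : Fin n)
            = ⟨2, hn3⟩ := Fin.ext (by simp [Nat.mod_eq_of_lt hn3])
        have f1 : (⟨((⟨0, hn⟩ : Fin n).1 + 1) % n, Nat.mod_lt _ hn⟩ : Fin n)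
            = ⟨1, by omega⟩ := Fin.ext (by simp [Nat.mod_eq_of_lt (show 1 < n by omega)])
        rw [f2, f1, b1]
        have b2 : dOp4 hn3 a ⟨2, hn3⟩ = a ⟨2, hn3⟩ := by simp [dOp4]
        rw [b2]
        simp only [map_add, map_neg]
        linear_combination (phi (a ⟨2, hn3⟩) - phi (a ⟨0, hn⟩)) * h2
      · rw [if_neg h0, if_neg h1, traMap_apply, traMap_apply]
        have hge : 2 ≤ i.1 := by omega
        have hnext : (i.1 + 1) % n ≠ 1 := by
          intro hc
          rcases Nat.lt_or_ge (i.1 + 1) n with h | h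
          · rw [Nat.mod_eq_of_lt h] at hc; omega
          · have hx : i.1 + 1 = n := by omega
            rw [hx, Nat.mod_self] at hc; omega
        have bi : dOp4 hn3 a i = a i := by simp [dOp4, h1]
        have bj : dOp4 hn3 a ⟨(i.1 + 1) % n, Nat.mod_lt _ hn⟩
            = a ⟨(i.1 + 1) % n, Nat.mod_lt _ hn⟩ := by simp [dOp4, hnext]
        rw [bi, bj]
  rw [key]

private lemma op4_card {p : ℕ} [NeZero p] (hp2 : 2 ∣ p) {n : ℕ} (hn3 : 2 < n)
    (hn : 0 < n) (a : Fin n → ZMod p) :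
    (Finset.univ.filter fun i : Fin n => Even (cycS hn (dOp4 hn3 a) i)).card =
    (Finset.univ.filter fun i : Fin n => Even (cycS hn a i)).card := by
  let f : Fin n → Fin n := fun i =>
    if i.1 = 0 then ⟨1, by omega⟩ else if i.1 = 1 then ⟨0, by omega⟩ else i
  have hself : ∀ i, f (f i) = i := by
    intro i
    by_cases h0 : i.1 = 0
    · simp only [f, if_pos h0]
      norm_num
      exact Fin.ext h0.symm
    · by_cases h1 : i.1 = 1
      · simp only [f, if_neg h0, if_pos h1]
        norm_num
        exact Fin.ext h1.symm
      · simp only [f, if_neg h0, if_neg h1]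
  let e : Fin n ≃ Fin n := ⟨f, f, hself, hself⟩
  refine Finset.card_equiv e fun i => ?_
  simp only [Finset.mem_filter, Finset.mem_univ, true_and]
  exact op4_parity hp2 hn3 hn a i

private noncomputable def muFun (p : ℕ) (t : DehnTuple p) : ℤ :=
  if h : 0 < t.1 then muInv p h t.2 else 0

private lemma muFun_step {p : ℕ} [NeZero p] (hp2 : 2 ∣ p) {s t : DehnTuple p}
    (hst : DehnStep p s t) : muFun p s = muFun p t := by
  cases hst with
  | op1 hn he a =>
      show muFun p ⟨_, a⟩ = muFun p ⟨_, dOp1 hn a⟩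
      rw [muFun, muFun, dif_pos hn, dif_pos hn]
      rw [muInv_eq_card, muInv_eq_card, op1_card]
  | op2 hn he x a =>
      rw [muFun, muFun, dif_pos hn, dif_pos hn]
      exact (muInv_congr p hn _ _ fun i => op2_parity hp2 hn x a i).symm
  | op3 hn he x a =>
      rw [muFun, muFun, dif_pos hn, dif_pos hn]
      exact (muInv_congr p hn _ _ fun i => op3_parity hp2 hn x a i).symm
  | op4 hn3 he a =>
      have hn : 0 < _ := Nat.lt_of_succ_lt (Nat.lt_of_succ_lt hn3)
      rw [muFun, muFun, dif_pos hn, dif_pos hn]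
      rw [muInv_eq_card, muInv_eq_card, op4_card hp2 hn3]

end MuAux

/-- for even `p`, `μ_p` is an invariant of `~`. -/
theorem muInv_invariant (p : ℕ) (hp : 2 ≤ p) (hpe : Even p) (m n : ℕ)
    (hm : 0 < m) (hme : Even m) (hn : 0 < n) (hne : Even n)
    (a : Fin m → ZMod p) (b : Fin n → ZMod p)
    (h : DehnEquiv p ⟨m, a⟩ ⟨n, b⟩) :
    muInv p hm a = muInv p hn b := by
  haveI : NeZero p := ⟨by omega⟩
  have hp2 : 2 ∣ p := hpe.two_dvd
  have key : ∀ s t : DehnTuple p, DehnEquiv p s t → muFun p s = muFun p t := by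
    intro s t h
    induction h with
    | refl => rfl
    | tail _ h2 ih => exact ih.trans (muFun_step hp2 h2)
  have := key ⟨m, a⟩ ⟨n, b⟩ h
  rw [muFun, muFun, dif_pos hm, dif_pos hn] at this
  exact this
end

section
/- Let p ≥ 2 be even and let τ ∈ {1,...,p} be even with τ dividing p and p/τ even. If a, b ∈ U_p and a ~ b, then μ_{p,τ}(a) = μ_{p,τ}(b); that is, μ_{p,τ} is an invariant of the equivalence relation ~. -/
open scoped Classical

section MuTauAux

variable {p τ n : ℕ}

/-- Next index (cyclically). -/
def nxtIdx (hn : 0 < n) (i : Fin n) : Fin n := ⟨(i.1 + 1) % n, Nat.mod_lt _ hn⟩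

lemma cycS_eq (hn : 0 < n) (a : Fin n → ZMod p) (i : Fin n) :
    cycS hn a i = (a i).val + (a (nxtIdx hn i)).val := rfl

/-- Consecutive cyclic sums, computed in `ZMod p`. -/
def zsum (hn : 0 < n) (a : Fin n → ZMod p) (i : Fin n) : ZMod p := a i + a (nxtIdx hn i)

/-- Cyclic sums reduced mod `k`. -/
def cS (k : ℕ) (hn : 0 < n) (a : Fin n → ZMod p) (i : Fin n) : ZMod k :=
  ((cycS hn a i : ℕ) : ZMod k)

lemma cS_eq_cast [NeZero p] {k : ℕ} (hk : k ∣ p) (hn : 0 < n) (a : Fin n → ZMod p) (i : Fin n) :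
    cS k hn a i = ZMod.castHom hk (ZMod k) (zsum hn a i) := by
  simp only [cS, cycS_eq, zsum, Nat.cast_add, map_add, ZMod.natCast_val, ZMod.castHom_apply]

lemma tauInv_mem (hp0 : 0 < p) (hn : 0 < n) (a : Fin n → ZMod p) :
    0 < tauInv p hn a ∧ tauInv p hn a ∣ p ∧
      ∀ i j : Fin n, cycS hn a i ≡ cycS hn a j [MOD tauInv p hn a] :=
by
  have h := Nat.sSup_mem
    (s := {k : ℕ | 0 < k ∧ k ∣ p ∧ ∀ i j : Fin n, cycS hn a i ≡ cycS hn a j [MOD k]})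
    ⟨1, ⟨one_pos, one_dvd p, fun i j => Nat.modEq_one⟩⟩
    ⟨p, fun k hk => Nat.le_of_dvd hp0 hk.2.1⟩
  exact h

lemma cS_eq_iff_modEq {k : ℕ} (hn : 0 < n) (a : Fin n → ZMod p) (i j : Fin n) :
    cS k hn a i = cS k hn a j ↔ cycS hn a i ≡ cycS hn a j [MOD k] :=
  ZMod.natCast_eq_natCast_iff _ _ _

lemma tauInv_eq_sSup (hn : 0 < n) (a : Fin n → ZMod p) :
    tauInv p hn a =
      sSup {k : ℕ | 0 < k ∧ k ∣ p ∧ ∀ i j : Fin n, cS k hn a i = cS k hn a j} := by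
  unfold tauInv
  congr 1
  ext k
  simp [cS_eq_iff_modEq]

lemma two_tau_dvd (hτd : τ ∣ p) (hq : Even (p / τ)) (hτ0 : 0 < τ) : 2 * τ ∣ p := by
  obtain ⟨c, hc⟩ := hq
  obtain ⟨d, hd⟩ := hτd
  have : d = c + c := by
    subst hd
    rwa [Nat.mul_div_cancel_left _ hτ0] at hc
  exact ⟨c, by subst hd; subst this; ring⟩

lemma tau_ne_zero_zmod (hτ0 : 0 < τ) : ((τ : ℕ) : ZMod (2 * τ)) ≠ 0 := by
  simp only [Ne, ZMod.natCast_eq_zero_iff]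
  intro hdvd
  have := Nat.le_of_dvd hτ0 hdvd
  omega

lemma cS_dichotomy (hτ0 : 0 < τ) (hn : 0 < n) (a : Fin n → ZMod p)
    (hc : ∀ i j : Fin n, cycS hn a i ≡ cycS hn a j [MOD τ]) (i j : Fin n) :
    cS (2 * τ) hn a i = cS (2 * τ) hn a j ∨
      cS (2 * τ) hn a i = cS (2 * τ) hn a j + τ := by
  have h1 : (τ : ℤ) ∣ (cycS hn a i : ℤ) - (cycS hn a j : ℤ) :=
    (Int.natCast_modEq_iff.mpr (hc j i)).dvd
  obtain ⟨u, hu⟩ := h1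
  rcases Int.even_or_odd u with ⟨v, hv⟩ | ⟨v, hv⟩
  · left
    rw [cS_eq_iff_modEq, ← Int.natCast_modEq_iff, Int.modEq_iff_dvd]
    exact ⟨-v, by push_cast; linear_combination (-1:ℤ) * hu + (-(τ:ℤ)) * hv⟩
  · right
    have h2 : cS (2 * τ) hn a j + ((τ : ℕ) : ZMod (2 * τ)) =
        ((cycS hn a j + τ : ℕ) : ZMod (2 * τ)) := by
      push_cast [cS]
      ring
    rw [h2, cS, ZMod.natCast_eq_natCast_iff, ← Int.natCast_modEq_iff, Int.modEq_iff_dvd]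
    exact ⟨-v, by push_cast; linear_combination (-1:ℤ) * hu + (-(τ:ℤ)) * hv⟩

end MuTauAux

section MuTauAux2

variable {p τ n : ℕ}

lemma card_filter_perm {α : Type*} [Fintype α] [DecidableEq α] (σ : Equiv.Perm α)
    (q : α → Prop) [DecidablePred q] :
    (Finset.univ.filter fun i => q (σ i)).card = (Finset.univ.filter q).card := by
  apply Finset.card_bij' (fun i _ => σ i) (fun i _ => σ.symm i) <;> simp

/-- The count invariant does not depend on the reference index. -/
lemma count_indep (hτ0 : 0 < τ) (hn : 0 < n) (a : Fin n → ZMod p)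
    (hc : ∀ i j : Fin n, cycS hn a i ≡ cycS hn a j [MOD τ]) (r : Fin n) :
    |2 * ((Finset.univ.filter fun i => cS (2 * τ) hn a i = cS (2 * τ) hn a r).card : ℤ) - n| =
    |2 * ((Finset.univ.filter fun i => cS (2 * τ) hn a i = cS (2 * τ) hn a ⟨0, hn⟩).card : ℤ)
      - n| := by
  set z : Fin n := ⟨0, hn⟩
  rcases cS_dichotomy hτ0 hn a hc r z with h | h
  · simp only [h]
  · have hne : cS (2 * τ) hn a z ≠ cS (2 * τ) hn a r := by
      rw [h]
      intro habs
      exact tau_ne_zero_zmod hτ0 (by linear_combination -habs)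
    have hiff : ∀ i : Fin n,
        (cS (2 * τ) hn a i = cS (2 * τ) hn a r) ↔ ¬ (cS (2 * τ) hn a i = cS (2 * τ) hn a z) := by
      intro i
      constructor
      · intro h1 h2
        exact hne (h2.symm.trans h1)
      · intro h1
        rcases cS_dichotomy hτ0 hn a hc i z with h2 | h2
        · exact absurd h2 h1
        · rw [h2, ← h]
    have hfeq : (Finset.univ.filter fun i => cS (2 * τ) hn a i = cS (2 * τ) hn a r) =
        (Finset.univ.filter fun i => ¬ (cS (2 * τ) hn a i = cS (2 * τ) hn a z)) :=
      Finset.filter_congr fun i _ => hiff i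
    have hsum := Finset.card_filter_add_card_filter_not
      (s := (Finset.univ : Finset (Fin n)))
      (p := fun i => cS (2 * τ) hn a i = cS (2 * τ) hn a z)
    rw [Finset.card_univ, Fintype.card_fin] at hsum
    rw [hfeq]
    have h1 : ((Finset.univ.filter fun i =>
        ¬ (cS (2 * τ) hn a i = cS (2 * τ) hn a z)).card : ℤ) =
        n - ((Finset.univ.filter fun i => cS (2 * τ) hn a i = cS (2 * τ) hn a z).card : ℤ) := by
      omega
    rw [h1]
    have h2 : 2 * ((n : ℤ) -
        ((Finset.univ.filter fun i => cS (2 * τ) hn a i = cS (2 * τ) hn a z).card : ℤ)) - n =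
        -(2 * ((Finset.univ.filter fun i => cS (2 * τ) hn a i = cS (2 * τ) hn a z).card : ℤ)
          - n) := by ring
    rw [h2, abs_neg]

/-- The `μ_{p,τ}` invariant expressed through the cyclic sums only. -/
noncomputable def Gfun (p τ : ℕ) {n : ℕ} (hn : 0 < n) (a : Fin n → ZMod p) : WithTop ℤ :=
  if tauInv p hn a = τ then
    ((|2 * ((Finset.univ.filter fun i =>
        cS (2 * τ) hn a i = cS (2 * τ) hn a ⟨0, hn⟩).card : ℤ) - n| : ℤ) : WithTop ℤ)
  else ⊤

lemma Gfun_congr (hp0 : 0 < p) (hτ0 : 0 < τ) (hn : 0 < n) (a a' : Fin n → ZMod p)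
    (H1 : ∀ k : ℕ, k ∣ p →
      ((∀ i j : Fin n, cS k hn a' i = cS k hn a' j) ↔ (∀ i j : Fin n, cS k hn a i = cS k hn a j)))
    (H2 : (∀ i j : Fin n, cycS hn a i ≡ cycS hn a j [MOD τ]) →
      ∃ r : Fin n, (Finset.univ.filter fun i =>
          cS (2 * τ) hn a' i = cS (2 * τ) hn a' ⟨0, hn⟩).card =
        (Finset.univ.filter fun i => cS (2 * τ) hn a i = cS (2 * τ) hn a r).card) :
    Gfun p τ hn a' = Gfun p τ hn a := by
  have htau : tauInv p hn a' = tauInv p hn a := by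
    rw [tauInv_eq_sSup, tauInv_eq_sSup]
    congr 1
    ext k
    simp only [Set.mem_setOf_eq]
    constructor
    · rintro ⟨h1, h2, h3⟩
      exact ⟨h1, h2, (H1 k h2).mp h3⟩
    · rintro ⟨h1, h2, h3⟩
      exact ⟨h1, h2, (H1 k h2).mpr h3⟩
  unfold Gfun
  rw [htau]
  by_cases ht : tauInv p hn a = τ
  · rw [if_pos ht, if_pos ht]
    have hc := (tauInv_mem hp0 hn a).2.2
    rw [ht] at hc
    obtain ⟨r, hr⟩ := H2 hc
    rw [hr]
    exact congrArg _ (count_indep hτ0 hn a hc r)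
  · rw [if_neg ht, if_neg ht]

lemma card_shift (hn : 0 < n) (a a' : Fin n → ZMod p) (σ : Equiv.Perm (Fin n))
    (h : ∀ i, cS (2 * τ) hn a' i = cS (2 * τ) hn a (σ i)) :
    ∃ r : Fin n, (Finset.univ.filter fun i =>
        cS (2 * τ) hn a' i = cS (2 * τ) hn a' ⟨0, hn⟩).card =
      (Finset.univ.filter fun i => cS (2 * τ) hn a i = cS (2 * τ) hn a r).card := by
  refine ⟨σ ⟨0, hn⟩, ?_⟩
  simp only [h]
  exact card_filter_perm σ (fun j => cS (2 * τ) hn a j = cS (2 * τ) hn a (σ ⟨0, hn⟩))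

lemma allCong_of_perm {k : ℕ} (hn : 0 < n) (a a' : Fin n → ZMod p) (σ : Equiv.Perm (Fin n))
    (h : ∀ i, cS k hn a' i = cS k hn a (σ i)) :
    (∀ i j : Fin n, cS k hn a' i = cS k hn a' j) ↔
      (∀ i j : Fin n, cS k hn a i = cS k hn a j) := by
  constructor
  · intro H i j
    have := H (σ.symm i) (σ.symm j)
    rwa [h, h, σ.apply_symm_apply, σ.apply_symm_apply] at this
  · intro H i j
    rw [h, h]
    exact H _ _

/-- Invariance of `Gfun` when the cyclic sums are permuted (in `ZMod p`). -/
lemma Gfun_of_zsum_perm [NeZero p] (hp0 : 0 < p) (hτ0 : 0 < τ) (h2τ : 2 * τ ∣ p)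
    (hn : 0 < n) (a a' : Fin n → ZMod p) (σ : Equiv.Perm (Fin n))
    (hz : ∀ i, zsum hn a' i = zsum hn a (σ i)) :
    Gfun p τ hn a' = Gfun p τ hn a := by
  have hcs : ∀ (k : ℕ) (hk : k ∣ p) (i : Fin n), cS k hn a' i = cS k hn a (σ i) := by
    intro k hk i
    rw [cS_eq_cast hk, cS_eq_cast hk, hz]
  exact Gfun_congr hp0 hτ0 hn a a'
    (fun k hk => allCong_of_perm hn a a' σ (hcs k hk))
    (fun _ => card_shift hn a a' σ (hcs (2 * τ) h2τ))

end MuTauAux2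

section MuTauAux3

variable {p τ n : ℕ}

lemma Gfun_op1 [NeZero p] (hp0 : 0 < p) (hτ0 : 0 < τ) (h2τ : 2 * τ ∣ p)
    (hn : 0 < n) (a : Fin n → ZMod p) :
    Gfun p τ hn (dOp1 hn a) = Gfun p τ hn a := by
  haveI : NeZero n := ⟨hn.ne'⟩
  have hadd : ∀ i : Fin n, i + (1 : Fin n) = nxtIdx hn i := by
    intro i
    rw [Fin.ext_iff, Fin.add_def, Fin.val_one']
    show (i.1 + 1 % n) % n = (i.1 + 1) % n
    conv_rhs => rw [Nat.add_mod, ← Nat.mod_mod_of_dvd 1 (dvd_refl n), ← Nat.add_mod]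
  apply Gfun_of_zsum_perm hp0 hτ0 h2τ hn a _ (Equiv.addRight (1 : Fin n))
  intro i
  show zsum hn (dOp1 hn a) i = zsum hn a (i + 1)
  rw [hadd]
  rfl

lemma Gfun_op2 [NeZero p] (hp0 : 0 < p) (hτ0 : 0 < τ) (h2τ : 2 * τ ∣ p)
    (hn : 0 < n) (hne : Even n) (x : ZMod p) (a : Fin n → ZMod p) :
    Gfun p τ hn (dOp2 hn x a) = Gfun p τ hn a := by
  apply Gfun_of_zsum_perm hp0 hτ0 h2τ hn a _ (Equiv.refl _)
  intro i
  rw [Equiv.refl_apply]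
  have e : zsum hn (dOp2 hn x a) i = zsum hn a i +
      ((-1 : ZMod p) ^ (i.1 + 1) + (-1 : ZMod p) ^ ((nxtIdx hn i).1 + 1)) *
        (a ⟨0, hn⟩ - x) := by
    simp only [zsum, dOp2]
    ring
  by_cases hi : i.1 + 1 = n
  · have h0 : (nxtIdx hn i).1 = 0 := by simp [nxtIdx, hi]
    rw [e, h0, hi]
    simp [hne.neg_one_pow]
  · have hlt : i.1 + 1 < n := by
      have h2 := i.2
      omega
    have h0 : (nxtIdx hn i).1 = i.1 + 1 := Nat.mod_eq_of_lt hlt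
    rw [e, h0]
    have hpow : (-1 : ZMod p) ^ (i.1 + 1 + 1) = -(-1 : ZMod p) ^ (i.1 + 1) := by
      rw [pow_succ]; ring
    rw [hpow]
    ring

lemma Gfun_op3 [NeZero p] (hp0 : 0 < p) (hτ0 : 0 < τ) (h2τ : 2 * τ ∣ p)
    (hn : 0 < n) (x : ZMod p) (a : Fin n → ZMod p) :
    Gfun p τ hn (dOp3 hn x a) = Gfun p τ hn a := by
  have hz : ∀ i, zsum hn (dOp3 hn x a) i = (2 * a ⟨0, hn⟩ + 2 * x) - zsum hn a i := by
    intro i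
    simp only [zsum, dOp3]
    ring
  have hcs : ∀ (k : ℕ) (hk : k ∣ p) (i : Fin n),
      cS k hn (dOp3 hn x a) i =
        ZMod.castHom hk (ZMod k) (2 * a ⟨0, hn⟩ + 2 * x) - cS k hn a i := by
    intro k hk i
    rw [cS_eq_cast hk, cS_eq_cast hk, hz, map_sub]
  apply Gfun_congr hp0 hτ0 hn
  · intro k hk
    constructor
    · intro H i j
      have := H i j
      rw [hcs k hk, hcs k hk] at this
      exact sub_right_inj.mp this
    · intro H i j
      rw [hcs k hk, hcs k hk, H i j]
  · intro _
    refine ⟨⟨0, hn⟩, ?_⟩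
    congr 1
    apply Finset.filter_congr
    intro i _
    rw [hcs _ h2τ, hcs _ h2τ]
    exact sub_right_inj

lemma Gfun_op4 [NeZero p] (hp0 : 0 < p) (hτ0 : 0 < τ) (h2τ : 2 * τ ∣ p)
    (hn2 : 2 < n) (a : Fin n → ZMod p) :
    Gfun p τ (by omega) (dOp4 hn2 a) = Gfun p τ (by omega) a := by
  have hn : 0 < n := by omega
  set a' := dOp4 hn2 a with ha'
  set i0 : Fin n := ⟨0, by omega⟩
  set i1 : Fin n := ⟨1, by omega⟩
  set i2 : Fin n := ⟨2, hn2⟩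
  have dge : ∀ i : Fin n, i.1 ≠ 1 → a' i = a i := fun i h => if_neg h
  have d1 : a' i1 = -a i0 + a i1 + a i2 := rfl
  have n1 : nxtIdx hn i0 = i1 := by
    rw [Fin.ext_iff]
    show (0 + 1) % n = 1
    rw [Nat.mod_eq_of_lt (by omega)]
  have n2 : nxtIdx hn i1 = i2 := by
    rw [Fin.ext_iff]
    show (1 + 1) % n = 2
    rw [Nat.mod_eq_of_lt (by omega)]
  have hz0 : zsum hn a' i0 = zsum hn a i1 := by
    rw [zsum, zsum, n1, n2, dge i0 (show (0:ℕ) ≠ 1 by omega), d1]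
    ring
  have hz1 : zsum hn a' i1 = 2 * zsum hn a i1 - zsum hn a i0 := by
    rw [zsum, zsum, zsum, n2, n1, d1, dge i2 (show (2:ℕ) ≠ 1 by omega)]
    ring
  have hzi : ∀ i : Fin n, 2 ≤ i.1 → zsum hn a' i = zsum hn a i := by
    intro i hi
    have hv : (nxtIdx hn i).1 = (i.1 + 1) % n := rfl
    have hne1 : (nxtIdx hn i).1 ≠ 1 := by
      rw [hv]
      rcases eq_or_lt_of_le (show i.1 + 1 ≤ n from i.2) with he | hl
      · rw [he, Nat.mod_self]
        omega
      · rw [Nat.mod_eq_of_lt hl]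
        omega
    rw [zsum, zsum, dge i (by omega), dge _ hne1]
  have hc0 : ∀ (k : ℕ) (hk : k ∣ p), cS k hn a' i0 = cS k hn a i1 := by
    intro k hk
    rw [cS_eq_cast hk, cS_eq_cast hk, hz0]
  have hc1 : ∀ (k : ℕ) (hk : k ∣ p),
      cS k hn a' i1 = 2 * cS k hn a i1 - cS k hn a i0 := by
    intro k hk
    rw [cS_eq_cast hk, cS_eq_cast hk, cS_eq_cast hk, hz1]
    simp [map_sub, map_mul, map_ofNat]
  have hci : ∀ (k : ℕ) (hk : k ∣ p) (i : Fin n), 2 ≤ i.1 → cS k hn a' i = cS k hn a i := by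
    intro k hk i hi
    rw [cS_eq_cast hk, cS_eq_cast hk, hzi i hi]
  apply Gfun_congr hp0 hτ0 hn
  · intro k hk
    constructor
    · intro H
      have e01 : cS k hn a i0 = cS k hn a i1 := by
        have h10 := H i1 i0
        rw [hc1 k hk, hc0 k hk] at h10
        linear_combination -h10
      suffices hall : ∀ i : Fin n, cS k hn a i = cS k hn a i1 by
        intro i j; rw [hall i, hall j]
      intro i
      rcases i with ⟨(_ | _ | iv), hiv⟩
      · exact e01
      · rfl
      · have := H ⟨iv + 2, hiv⟩ i0
        rw [hci k hk ⟨iv + 2, hiv⟩ (show 2 ≤ iv + 2 by omega), hc0 k hk] at this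
        exact this
    · intro H
      suffices hall : ∀ i : Fin n, cS k hn a' i = cS k hn a i1 by
        intro i j; rw [hall i, hall j]
      intro i
      rcases i with ⟨(_ | _ | iv), hiv⟩
      · exact hc0 k hk
      · rw [hc1 k hk]
        linear_combination -(H i0 i1)
      · rw [hci k hk ⟨iv + 2, hiv⟩ (show 2 ≤ iv + 2 by omega)]
        exact H _ _
  · intro hc
    have key2 : 2 * (cS (2 * τ) hn a i1 - cS (2 * τ) hn a i0) = 0 := by
      rcases cS_dichotomy hτ0 hn a hc i1 i0 with h | h
      · rw [h]; ring
      · rw [h]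
        have h2 : ((2 * τ : ℕ) : ZMod (2 * τ)) = 0 := ZMod.natCast_self _
        push_cast at h2
        linear_combination h2
    refine card_shift hn a a' (Equiv.swap i0 i1) ?_
    intro i
    rcases i with ⟨(_ | _ | iv), hiv⟩
    · rw [show ((⟨0, hiv⟩ : Fin n) : Fin n) = i0 from rfl, Equiv.swap_apply_left]
      exact hc0 _ h2τ
    · rw [show ((⟨1, hiv⟩ : Fin n) : Fin n) = i1 from rfl, Equiv.swap_apply_right]
      rw [hc1 _ h2τ]
      linear_combination key2
    · rw [Equiv.swap_apply_of_ne_of_ne (Fin.ne_of_val_ne (show iv + 2 ≠ 0 by omega))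
        (Fin.ne_of_val_ne (show iv + 2 ≠ 1 by omega))]
      exact hci _ h2τ _ (show 2 ≤ iv + 2 by omega)

end MuTauAux3

section MuTauAux4

variable {p τ : ℕ}

lemma muTauInv_eq_Gfun (hp : 2 ≤ p) (hτ1 : 1 ≤ τ) (hτp : τ ≤ p) (hτd : τ ∣ p)
    (hq : Even (p / τ)) {n : ℕ} (hn1 : 1 < n) (hne : Even n) (a : Fin n → ZMod p) :
    muTauInv p hn1 τ a = Gfun p τ (show 0 < n by omega) a := by
  have hn0 : 0 < n := by omega
  haveI : NeZero p := ⟨by omega⟩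
  have hτ0 : 0 < τ := hτ1
  have hq0 : 0 < p / τ := Nat.div_pos hτp hτ0
  haveI : NeZero (p / τ) := ⟨by omega⟩
  unfold muTauInv Gfun
  split_ifs with h1 h2
  · -- main case
    refine congrArg _ ?_
    -- hypotheses on congruence
    have hc : ∀ i j : Fin n, cycS hn0 a i ≡ cycS hn0 a j [MOD τ] := by
      have h := (tauInv_mem (show 0 < p by omega) hn0 a).2.2
      rwa [show tauInv p hn0 a = τ from h1] at h
    have nxt_of_lt : ∀ (mv : ℕ) (h : mv + 1 < n),
        nxtIdx hn0 ⟨mv, by omega⟩ = ⟨mv + 1, h⟩ := by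
      intro mv h
      rw [Fin.ext_iff]
      show (mv + 1) % n = mv + 1
      exact Nat.mod_eq_of_lt h
    -- Step 1: divisibility of differences
    have key : ∀ (m : ℕ) (hm : m < n), (τ : ℤ) ∣
        (((a ⟨m, hm⟩).val : ℤ) -
          (if Even m then ((a ⟨0, by omega⟩).val : ℤ) else ((a ⟨1, hn1⟩).val : ℤ))) := by
      intro m
      induction m using Nat.strong_induction_on with
      | _ m ih =>
        intro hm
        rcases m with (_ | (_ | m'))
        · simp
        · norm_num
        · have h1m : m' + 1 < n := by omega
          have h0m : m' < n := by omega
          have hdvd : (τ : ℤ) ∣ (((a ⟨m' + 2, hm⟩).val : ℤ) - ((a ⟨m', h0m⟩).val : ℤ)) := by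
            have hd := (Int.natCast_modEq_iff.mpr
              (hc ⟨m', h0m⟩ ⟨m' + 1, h1m⟩)).dvd
            rw [cycS_eq, cycS_eq, nxt_of_lt m' h1m, nxt_of_lt (m' + 1) hm] at hd
            obtain ⟨u, hu⟩ := hd
            refine ⟨u, ?_⟩
            push_cast at hu ⊢
            linarith
          have hih := ih m' (by omega) h0m
          have hpar : Even (m' + 2) ↔ Even m' := by simp [Nat.even_add]
          by_cases he : Even m'
          · rw [if_pos (hpar.mpr he)]
            rw [if_pos he] at hih
            obtain ⟨u, hu⟩ := hdvd
            obtain ⟨v, hv⟩ := hih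
            exact ⟨u + v, by linear_combination hu + hv⟩
          · rw [if_neg (fun hh => he (hpar.mp hh))]
            rw [if_neg he] at hih
            obtain ⟨u, hu⟩ := hdvd
            obtain ⟨v, hv⟩ := hih
            exact ⟨u + v, by linear_combination hu + hv⟩
    -- Step 2: the reduced tuple via integer quotients
    set b := reducedTuple p hn1 τ a with hbdef
    set Bfun : Fin n → ℤ := fun i =>
      ((((a i).val : ℤ) -
        (if Even i.1 then ((a ⟨0, by omega⟩).val : ℤ) else ((a ⟨1, hn1⟩).val : ℤ))) / (τ : ℤ))
      with hBdef
    have hBdvd : ∀ i : Fin n, (τ : ℤ) ∣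
        (((a i).val : ℤ) -
          (if Even i.1 then ((a ⟨0, by omega⟩).val : ℤ) else ((a ⟨1, hn1⟩).val : ℤ))) :=
      fun i => key i.1 i.2
    have hB : ∀ i : Fin n, (τ : ℤ) * Bfun i =
        ((a i).val : ℤ) -
          (if Even i.1 then ((a ⟨0, by omega⟩).val : ℤ) else ((a ⟨1, hn1⟩).val : ℤ)) :=
      fun i => Int.mul_ediv_cancel' (hBdvd i)
    have hb : ∀ i : Fin n, b i = ((Bfun i : ℤ) : ZMod (p / τ)) := fun i => rfl
    -- Step 3: values of the reduced tuple mod 2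
    have hval : ∀ i : Fin n, ((b i).val : ℤ) ≡ Bfun i [ZMOD ((p / τ : ℕ) : ℤ)] := by
      intro i
      have h1' : ((b i).val : ℤ) = Bfun i % ((p / τ : ℕ) : ℤ) := by
        rw [hb i]
        exact ZMod.val_intCast (Bfun i)
      show _ % _ = _ % _
      rw [h1', Int.emod_emod_of_dvd _ dvd_rfl]
    have h2q : (2 : ℤ) ∣ ((p / τ : ℕ) : ℤ) := by
      obtain ⟨c, hc2⟩ := hq
      exact ⟨(c : ℤ), by push_cast [hc2]; ring⟩
    have hval2 : ∀ i : Fin n, ((b i).val : ℤ) ≡ Bfun i [ZMOD 2] :=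
      fun i => (hval i).of_dvd h2q
    -- Step 4: parity of cyclic sums of the reduced tuple
    have hparEq : ∀ i : Fin n, (Even (cycS hn0 b i) ↔
        cS (2 * τ) hn0 a i = cS (2 * τ) hn0 a ⟨0, hn0⟩) := by
      intro i
      have hsum : ((cycS hn0 b i : ℕ) : ℤ) ≡ Bfun i + Bfun (nxtIdx hn0 i) [ZMOD 2] := by
        rw [cycS_eq]
        push_cast
        exact (hval2 i).add (hval2 _)
      have hEiff : Even (cycS hn0 b i) ↔ (2 : ℤ) ∣ (Bfun i + Bfun (nxtIdx hn0 i)) := by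
        rw [← Int.even_coe_nat, Int.even_iff]
        unfold Int.ModEq at hsum
        constructor <;> intro <;> omega
      have hp2 : Even ((nxtIdx hn0 i).1) ↔ ¬ Even i.1 := by
        show Even ((i.1 + 1) % n) ↔ _
        rcases eq_or_lt_of_le (show i.1 + 1 ≤ n from i.2) with heq | hlt
        · rw [heq, Nat.mod_self]
          exact iff_of_true Even.zero (Nat.even_add_one.mp (by rw [heq]; exact hne))
        · rw [Nat.mod_eq_of_lt hlt]
          exact Nat.even_add_one
      have hbase : (if Even i.1 then ((a ⟨0, by omega⟩).val : ℤ)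
            else ((a ⟨1, hn1⟩).val : ℤ)) +
          (if Even ((nxtIdx hn0 i)).1 then ((a ⟨0, by omega⟩).val : ℤ)
            else ((a ⟨1, hn1⟩).val : ℤ)) =
          ((a ⟨0, by omega⟩).val : ℤ) + ((a ⟨1, hn1⟩).val : ℤ) := by
        by_cases he : Even i.1
        · rw [if_pos he, if_neg (fun hh => (hp2.mp hh) he)]
        · rw [if_neg he, if_pos (hp2.mpr he)]
          ring
      have htau2 : (τ : ℤ) * (Bfun i + Bfun (nxtIdx hn0 i)) =
          ((cycS hn0 a i : ℕ) : ℤ) - ((cycS hn0 a ⟨0, hn0⟩ : ℕ) : ℤ) := by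
        have hnx0 : nxtIdx hn0 (⟨0, hn0⟩ : Fin n) = ⟨1, hn1⟩ := by
          rw [Fin.ext_iff]
          show (0 + 1) % n = 1
          rw [Nat.mod_eq_of_lt hn1]
        rw [mul_add, hB i, hB (nxtIdx hn0 i), cycS_eq, cycS_eq, hnx0]
        push_cast
        linear_combination -hbase
      have hfinal : ((2 : ℤ) ∣ (Bfun i + Bfun (nxtIdx hn0 i))) ↔
          cS (2 * τ) hn0 a i = cS (2 * τ) hn0 a ⟨0, hn0⟩ := by
        rw [cS_eq_iff_modEq, ← Int.natCast_modEq_iff, Int.modEq_iff_dvd]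
        constructor
        · rintro ⟨u, hu⟩
          refine ⟨-u, ?_⟩
          push_cast
          linear_combination htau2 - (τ : ℤ) * hu
        · rintro ⟨u, hu⟩
          refine ⟨-u, ?_⟩
          have hτne : (τ : ℤ) ≠ 0 := Int.natCast_ne_zero.mpr (by omega)
          apply mul_left_cancel₀ hτne
          push_cast at hu
          linear_combination htau2 - hu
      exact hEiff.trans hfinal
    -- Step 5: count
    have hEcard : (Finset.univ.filter fun i : Fin n => Even (cycS hn0 b i)) =
        (Finset.univ.filter fun i : Fin n =>
          cS (2 * τ) hn0 a i = cS (2 * τ) hn0 a ⟨0, hn0⟩) :=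
      Finset.filter_congr fun i _ => by rw [hparEq i]
    have hOcard : (Finset.univ.filter fun i : Fin n => Odd (cycS hn0 b i)) =
        (Finset.univ.filter fun i : Fin n =>
          ¬ (cS (2 * τ) hn0 a i = cS (2 * τ) hn0 a ⟨0, hn0⟩)) :=
      Finset.filter_congr fun i _ => by rw [← Nat.not_even_iff_odd, hparEq i]
    have hsplit := Finset.card_filter_add_card_filter_not
      (s := (Finset.univ : Finset (Fin n)))
      (p := fun i : Fin n => cS (2 * τ) hn0 a i = cS (2 * τ) hn0 a ⟨0, hn0⟩)
    rw [Finset.card_univ, Fintype.card_fin] at hsplit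
    rw [muInv, hEcard, hOcard]
    set N := (Finset.univ.filter fun i : Fin n =>
      cS (2 * τ) hn0 a i = cS (2 * τ) hn0 a ⟨0, hn0⟩).card with hNdef
    set O := (Finset.univ.filter fun i : Fin n =>
      ¬ (cS (2 * τ) hn0 a i = cS (2 * τ) hn0 a ⟨0, hn0⟩)).card with hOdef
    have hO : (O : ℤ) = (n : ℤ) - N := by omega
    rw [hO]
    have : (N : ℤ) - ((n : ℤ) - N) = 2 * N - n := by ring
    rw [this]
  · rfl

/-- Global form of the invariant on `DehnTuple p`. -/
noncomputable def Ffun (p τ : ℕ) (t : DehnTuple p) : WithTop ℤ :=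
  if h : 0 < t.1 then Gfun p τ h t.2 else ⊤

lemma Ffun_step (hp : 2 ≤ p) (hτ1 : 1 ≤ τ) (hτd : τ ∣ p) (hq : Even (p / τ))
    {t u : DehnTuple p} (h : DehnStep p t u) : Ffun p τ t = Ffun p τ u := by
  haveI : NeZero p := ⟨by omega⟩
  have hp0 : 0 < p := by omega
  have hτ0 : 0 < τ := hτ1
  have h2τ : 2 * τ ∣ p := two_tau_dvd hτd hq hτ0
  cases h with
  | op1 hn he a =>
    show Ffun p τ ⟨_, a⟩ = Ffun p τ ⟨_, dOp1 hn a⟩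
    unfold Ffun
    rw [dif_pos hn, dif_pos hn]
    exact (Gfun_op1 hp0 hτ0 h2τ hn a).symm
  | op2 hn he x a =>
    show Ffun p τ ⟨_, a⟩ = Ffun p τ ⟨_, dOp2 hn x a⟩
    unfold Ffun
    rw [dif_pos hn, dif_pos hn]
    exact (Gfun_op2 hp0 hτ0 h2τ hn he x a).symm
  | op3 hn he x a =>
    show Ffun p τ ⟨_, a⟩ = Ffun p τ ⟨_, dOp3 hn x a⟩
    unfold Ffun
    rw [dif_pos hn, dif_pos hn]
    exact (Gfun_op3 hp0 hτ0 h2τ hn x a).symm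
  | @op4 n hn he a =>
    show Ffun p τ ⟨n, a⟩ = Ffun p τ ⟨n, dOp4 hn a⟩
    unfold Ffun
    rw [dif_pos (show (0:ℕ) < n by omega), dif_pos (show (0:ℕ) < n by omega)]
    exact (Gfun_op4 hp0 hτ0 h2τ hn a).symm

end MuTauAux4

lemma Ffun_equiv {p τ : ℕ} (hp : 2 ≤ p) (hτ1 : 1 ≤ τ) (hτd : τ ∣ p) (hq : Even (p / τ))
    {t u : DehnTuple p} (h : DehnEquiv p t u) : Ffun p τ t = Ffun p τ u := by
  have h' : Relation.ReflTransGen (DehnStep p) t u := h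
  clear h
  induction h' with
  | refl => rfl
  | tail _ h2 ih => exact ih.trans (Ffun_step hp hτ1 hτd hq h2)

/-- for even `p` and even `τ ∈ {1,…,p}` with `τ ∣ p` and `p/τ`
even, `μ_{p,τ}` is an invariant of `~`. -/
theorem muTauInv_invariant (p τ : ℕ) (hp : 2 ≤ p) (hpe : Even p)
    (hτ1 : 1 ≤ τ) (hτp : τ ≤ p) (hτe : Even τ) (hτd : τ ∣ p)
    (hq : Even (p / τ)) (m n : ℕ)
    (hm : 1 < m) (hme : Even m) (hn : 1 < n) (hne : Even n)
    (a : Fin m → ZMod p) (b : Fin n → ZMod p)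
    (h : DehnEquiv p ⟨m, a⟩ ⟨n, b⟩) :
    muTauInv p hm τ a = muTauInv p hn τ b := by
  have hF : Ffun p τ ⟨m, a⟩ = Ffun p τ ⟨n, b⟩ := Ffun_equiv hp hτ1 hτd hq h
  have e1 : Ffun p τ ⟨m, a⟩ = Gfun p τ (show 0 < m by omega) a := by
    unfold Ffun
    rw [dif_pos (show (0:ℕ) < m by omega)]
  have e2 : Ffun p τ ⟨n, b⟩ = Gfun p τ (show 0 < n by omega) b := by
    unfold Ffun
    rw [dif_pos (show (0:ℕ) < n by omega)]
  rw [muTauInv_eq_Gfun hp hτ1 hτp hτd hq hm hme a,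
    muTauInv_eq_Gfun hp hτ1 hτp hτd hq hn hne b, ← e1, ← e2]
  exact hF
end

section
/- Let p ≥ 3 be odd. Then any two elements of U_{p,2} = Z_p^2 are equivalent under ~; in other words, U_{p,2}/~ consists of exactly one equivalence class, and every a ∈ Z_p^2 satisfies a ~ (0,0). -/
open scoped Classical

/-- for odd `p ≥ 3`, any two elements of `U_{p,2} = (ZMod p)^2`
are equivalent, and every element is equivalent to `(0,0)`. -/
theorem classification_n2_odd (p : ℕ) (hp : 3 ≤ p) (hpo : Odd p) :
    (∀ a b : Fin 2 → ZMod p, DehnEquiv p ⟨2, a⟩ ⟨2, b⟩) ∧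
    (∀ a : Fin 2 → ZMod p, DehnEquiv p ⟨2, a⟩ ⟨2, ![0, 0]⟩) := by
  have h2 : IsUnit (2 : ZMod p) := by
    have : NeZero p := ⟨by omega⟩
    have : ((2 : ℕ) : ZMod p) = (2 : ZMod p) := by norm_num
    rw [← this, ZMod.isUnit_iff_coprime]
    exact Nat.coprime_two_left.mpr hpo
  obtain ⟨c, hc⟩ := h2.exists_left_inv
  have main : ∀ a b : Fin 2 → ZMod p, DehnEquiv p ⟨2, a⟩ ⟨2, b⟩ := by
    intro a b
    set x : ZMod p := c * (b 0 + b 1 - a 0 + a 1) with hxdef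
    have hx : 2 * x = b 0 + b 1 - a 0 + a 1 := by
      rw [hxdef, ← mul_assoc, mul_comm (2 : ZMod p) c, hc, one_mul]
    have two_pos : (0 : ℕ) < 2 := by norm_num
    have he : Even 2 := even_two
    have hb : dOp2 two_pos (b 0) (dOp3 two_pos x a) = b := by
      funext i
      fin_cases i <;> simp [dOp2, dOp3] <;> linear_combination hx
    refine Relation.ReflTransGen.head (DehnStep.op3 two_pos he x a) ?_
    refine Relation.ReflTransGen.head (DehnStep.op2 two_pos he (b 0) _) ?_
    rw [hb]
  exact ⟨main, fun a => main a ![0, 0]⟩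
end

section
/- Let p ≥ 2 be even. On Z_p^2 the invariant ε_p takes only the values 0 and 1, and for a, b ∈ U_{p,2} = Z_p^2 one has a ~ b if and only if ε_p(a) = ε_p(b). Hence U_{p,2}/~ = { η_0, η_1 }, where η_ε = { a ∈ Z_p^2 : ε_p(a) = ε }, and these two classes are nonempty and distinct. -/
open scoped Classical

section ClassAux

variable {p : ℕ}

private lemma cycS_two' (a : Fin 2 → ZMod p) (i : Fin 2) :
    cycS (by norm_num) a i = (a 0).val + (a 1).val := by
  fin_cases i
  · rfl
  · exact Nat.add_comm _ _

private lemma val_cast_hom [NeZero p] (hd : 2 ∣ p) (z : ZMod p) :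
    ((z.val : ℕ) : ZMod 2) = ZMod.castHom hd (ZMod 2) z := by
  simp [ZMod.castHom_apply, ZMod.natCast_val]

private lemma eps_two [NeZero p] (hd : 2 ∣ p) (a : Fin 2 → ZMod p) :
    epsInv p (by norm_num) a =
      if ZMod.castHom hd (ZMod 2) (a 0 + a 1) = 0 then 0 else 1 := by
  have key : ZMod.castHom hd (ZMod 2) (a 0 + a 1)
      = (((a 0).val + (a 1).val : ℕ) : ZMod 2) := by
    rw [map_add, ← val_cast_hom hd, ← val_cast_hom hd, Nat.cast_add]
  have heven : (ZMod.castHom hd (ZMod 2) (a 0 + a 1) = 0)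
      ↔ Even ((a 0).val + (a 1).val) := by
    rw [key, ZMod.natCast_eq_zero_iff]
    exact ⟨fun h => even_iff_two_dvd.2 h, Even.two_dvd⟩
  unfold epsInv
  by_cases hE : Even ((a 0).val + (a 1).val)
  · rw [if_pos (fun i => by rw [cycS_two']; exact hE), if_pos (heven.2 hE)]
  · rw [if_neg, if_pos (fun i => by rw [cycS_two']; exact Nat.not_even_iff_odd.1 hE),
      if_neg (fun h => hE (heven.1 h))]
    push_neg
    exact ⟨0, by rw [cycS_two']; exact hE⟩

private lemma step_two [NeZero p] (hd : 2 ∣ p) {a : Fin 2 → ZMod p} {t : DehnTuple p}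
    (h : DehnStep p ⟨2, a⟩ t) :
    ∃ b : Fin 2 → ZMod p, t = ⟨2, b⟩ ∧
      ZMod.castHom hd (ZMod 2) (b 0 + b 1) = ZMod.castHom hd (ZMod 2) (a 0 + a 1) := by
  cases h with
  | op1 hn he =>
    refine ⟨_, rfl, ?_⟩
    have e : dOp1 hn a 0 + dOp1 hn a 1 = a 0 + a 1 := add_comm (a 1) (a 0)
    rw [e]
  | op2 hn he x =>
    refine ⟨_, rfl, ?_⟩
    have e : dOp2 hn x a 0 + dOp2 hn x a 1 = a 0 + a 1 := by
      show (a 0 + (-1 : ZMod p) ^ (0 + 1) * (a 0 - x))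
          + (a 1 + (-1 : ZMod p) ^ (1 + 1) * (a 0 - x)) = a 0 + a 1
      ring
    rw [e]
  | op3 hn he x =>
    refine ⟨_, rfl, ?_⟩
    have e : dOp3 hn x a 0 + dOp3 hn x a 1 = a 0 - a 1 + (x + x) := by
      show (a 0 - a 0 + x) + (a 0 - a 1 + x) = a 0 - a 1 + (x + x)
      ring
    rw [e]
    simp only [map_add, map_sub]
    have h2 : ∀ u v w : ZMod 2, u - v + (w + w) = u + v := by decide
    exact h2 _ _ _
  | op4 hn he =>
    exact absurd hn (by omega)

private lemma equiv_inv [NeZero p] (hd : 2 ∣ p) {a : Fin 2 → ZMod p} {t : DehnTuple p}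
    (h : DehnEquiv p ⟨2, a⟩ t) :
    ∃ b : Fin 2 → ZMod p, t = ⟨2, b⟩ ∧
      ZMod.castHom hd (ZMod 2) (b 0 + b 1) = ZMod.castHom hd (ZMod 2) (a 0 + a 1) := by
  induction h with
  | refl => exact ⟨a, rfl, rfl⟩
  | tail hst hstep ih =>
    obtain ⟨c, rfl, hc⟩ := ih
    obtain ⟨b, rfl, hb⟩ := step_two hd hstep
    exact ⟨b, rfl, hb.trans hc⟩

private lemma single_step {s t t' : DehnTuple p} (h : DehnStep p s t) (ht : t = t') :
    DehnEquiv p s t' := ht ▸ Relation.ReflTransGen.single h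

private lemma hn2 : (0 : ℕ) < 2 := by norm_num
private lemma he2 : Even 2 := ⟨1, rfl⟩

private lemma to_norm (a : Fin 2 → ZMod p) :
    DehnEquiv p ⟨2, a⟩ ⟨2, ![0, a 0 + a 1]⟩ := by
  refine single_step (DehnStep.op2 hn2 he2 0 a) ?_
  congr 1
  funext i
  fin_cases i
  · show a 0 + (-1 : ZMod p) ^ (0 + 1) * (a 0 - 0) = 0
    ring
  · show a 1 + (-1 : ZMod p) ^ (1 + 1) * (a 0 - 0) = a 0 + a 1
    ring

private lemma from_norm (a : Fin 2 → ZMod p) :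
    DehnEquiv p ⟨2, ![0, a 0 + a 1]⟩ ⟨2, a⟩ := by
  refine single_step (DehnStep.op2 hn2 he2 (a 0) ![0, a 0 + a 1]) ?_
  congr 1
  funext i
  fin_cases i
  · show (0 : ZMod p) + (-1 : ZMod p) ^ (0 + 1) * (0 - a 0) = a 0
    ring
  · show (a 0 + a 1) + (-1 : ZMod p) ^ (1 + 1) * (0 - a 0) = a 1
    ring

private lemma norm_flip (s x : ZMod p) :
    DehnEquiv p ⟨2, ![0, s]⟩ ⟨2, ![0, x + x - s]⟩ := by
  have h1 : DehnEquiv p (⟨2, ![0, s]⟩ : DehnTuple p) ⟨2, ![x, x - s]⟩ := by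
    refine single_step (DehnStep.op3 hn2 he2 x ![0, s]) ?_
    congr 1
    funext i
    fin_cases i
    · show (0 : ZMod p) - 0 + x = x
      ring
    · show (0 : ZMod p) - s + x = x - s
      ring
  have h2 : DehnEquiv p (⟨2, ![x, x - s]⟩ : DehnTuple p) ⟨2, ![x - s, x]⟩ := by
    refine single_step (DehnStep.op1 hn2 he2 ![x, x - s]) ?_
    congr 1
    funext i
    fin_cases i
    · rfl
    · rfl
  have h3 : DehnEquiv p (⟨2, ![x - s, x]⟩ : DehnTuple p) ⟨2, ![0, x + x - s]⟩ := by
    refine single_step (DehnStep.op2 hn2 he2 0 ![x - s, x]) ?_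
    congr 1
    funext i
    fin_cases i
    · show (x - s) + (-1 : ZMod p) ^ (0 + 1) * ((x - s) - 0) = 0
      ring
    · show x + (-1 : ZMod p) ^ (1 + 1) * ((x - s) - 0) = x + x - s
      ring
  exact (h1.trans h2).trans h3

end ClassAux

/-- for even `p`, on `(ZMod p)^2` the invariant `ε_p` takes only
the values `0` and `1`, two tuples are equivalent iff they have the same
`ε_p`, and both classes `η_0, η_1` are nonempty (hence distinct). -/
theorem classification_n2_even (p : ℕ) (hp : 2 ≤ p) (hpe : Even p) :
    (∀ a : Fin 2 → ZMod p,
        epsInv p (by norm_num) a = 0 ∨ epsInv p (by norm_num) a = 1) ∧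
    (∀ a b : Fin 2 → ZMod p,
        DehnEquiv p ⟨2, a⟩ ⟨2, b⟩ ↔
          epsInv p (by norm_num) a = epsInv p (by norm_num) b) ∧
    (∃ a : Fin 2 → ZMod p, epsInv p (by norm_num) a = 0) ∧
    (∃ a : Fin 2 → ZMod p, epsInv p (by norm_num) a = 1) := by
  haveI : NeZero p := ⟨by omega⟩
  have hd : 2 ∣ p := hpe.two_dvd
  have h01 : ∀ z : ZMod 2, z = 0 ∨ z = 1 := by decide
  refine ⟨?_, ?_, ?_, ?_⟩
  · intro a
    rw [eps_two hd a]
    split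
    · exact Or.inl rfl
    · exact Or.inr rfl
  · intro a b
    constructor
    · intro h
      obtain ⟨b', heq, hv⟩ := equiv_inv hd h
      have hb : b = b' := by simpa using heq
      subst hb
      rw [eps_two hd a, eps_two hd b, hv]
    · intro h
      rw [eps_two hd a, eps_two hd b] at h
      have hv : ZMod.castHom hd (ZMod 2) (a 0 + a 1)
          = ZMod.castHom hd (ZMod 2) (b 0 + b 1) := by
        rcases h01 (ZMod.castHom hd (ZMod 2) (a 0 + a 1)) with ha | ha <;>
          rcases h01 (ZMod.castHom hd (ZMod 2) (b 0 + b 1)) with hb | hb <;>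
          rw [ha, hb] <;> rw [ha, hb] at h <;> simp_all
      have hsum : ∃ x : ZMod p, x + x = (a 0 + a 1) + (b 0 + b 1) := by
        have h0 : ZMod.castHom hd (ZMod 2) ((a 0 + a 1) + (b 0 + b 1)) = 0 := by
          rw [map_add, hv]
          have hz : ∀ z : ZMod 2, z + z = 0 := by decide
          exact hz _
        have hEv : Even (((a 0 + a 1) + (b 0 + b 1)).val) := by
          rw [even_iff_two_dvd, ← ZMod.natCast_eq_zero_iff,
            val_cast_hom hd, h0]
        obtain ⟨m, hm⟩ := hEv
        refine ⟨(m : ZMod p), ?_⟩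
        have e1 : ((m : ZMod p)) + (m : ZMod p) = ((m + m : ℕ) : ZMod p) := by
          push_cast; ring
        rw [e1, ← hm]
        simp [ZMod.natCast_val, ZMod.cast_id]
      obtain ⟨x, hx⟩ := hsum
      have hflip := norm_flip (p := p) (a 0 + a 1) x
      have hxx : x + x - (a 0 + a 1) = b 0 + b 1 := by rw [hx]; ring
      rw [hxx] at hflip
      exact ((to_norm a).trans hflip).trans (from_norm b)
  · refine ⟨![0, 0], ?_⟩
    rw [eps_two hd]
    simp
  · refine ⟨![0, 1], ?_⟩
    rw [eps_two hd]
    rw [if_neg ?_]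
    · have e : (![0, 1] : Fin 2 → ZMod p) 0 + ![0, 1] 1 = 1 := by simp
      rw [e, map_one]
      exact one_ne_zero
end

section
/- Let p ≥ 2 be even and let a ∈ Z_p^2. If ε_p(a) = 0 then a ~ (0,0), and if ε_p(a) = 1 then a ~ (0,1). -/
open scoped Classical

/-- for even `p` and `a ∈ (ZMod p)^2`: if `ε_p(a) = 0` then
`a ~ (0,0)`, and if `ε_p(a) = 1` then `a ~ (0,1)`. -/
theorem representative_n2_even (p : ℕ) (hp : 2 ≤ p) (hpe : Even p)
    (a : Fin 2 → ZMod p) :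
    (epsInv p (by norm_num) a = 0 → DehnEquiv p ⟨2, a⟩ ⟨2, ![0, 0]⟩) ∧
    (epsInv p (by norm_num) a = 1 → DehnEquiv p ⟨2, a⟩ ⟨2, ![0, 1]⟩) := by
  have hn : (0:ℕ) < 2 := by norm_num
  haveI : NeZero p := ⟨by omega⟩
  set s : ZMod p := a 0 + a 1 with hs
  -- key: for any x, a ~ (0, 2x - s)
  have key : ∀ x : ZMod p, DehnEquiv p ⟨2, a⟩ ⟨2, ![(0:ZMod p), 2*x - s]⟩ := by
    intro x
    have h1 : DehnStep p ⟨2, a⟩ ⟨2, dOp2 hn 0 a⟩ := DehnStep.op2 hn (by decide) 0 a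
    have h2 : DehnStep p ⟨2, dOp2 hn 0 a⟩ ⟨2, dOp3 hn x (dOp2 hn 0 a)⟩ :=
      DehnStep.op3 hn (by decide) x _
    have h3 : DehnStep p ⟨2, dOp3 hn x (dOp2 hn 0 a)⟩
        ⟨2, dOp2 hn 0 (dOp3 hn x (dOp2 hn 0 a))⟩ :=
      DehnStep.op2 hn (by decide) 0 _
    have heq : dOp2 hn 0 (dOp3 hn x (dOp2 hn 0 a)) = ![(0:ZMod p), 2*x - s] := by
      funext i
      fin_cases i <;>
        simp [dOp2, dOp3, hs, Fin.isValue, Matrix.cons_val_zero, Matrix.cons_val_one,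
          Matrix.head_cons] <;> ring
    rw [heq] at h3
    exact Relation.ReflTransGen.head h1 (Relation.ReflTransGen.head h2
      (Relation.ReflTransGen.single h3))
  have hpar : s.val % 2 = (cycS hn a 0) % 2 := by
    have hv : s.val = ((a 0).val + (a 1).val) % p := ZMod.val_add _ _
    obtain ⟨m, hm⟩ := hpe
    have h2p : (2:ℕ) ∣ p := ⟨m, by omega⟩
    have : s.val % 2 = ((a 0).val + (a 1).val) % p % 2 := by rw [hv]
    rw [this, Nat.mod_mod_of_dvd _ h2p]
    have : cycS hn a 0 = (a 0).val + (a 1).val := by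
      simp [cycS]
    rw [this]
  constructor
  · intro h0
    have hev : ∀ i, Even (cycS hn a i) := by
      by_contra hc
      unfold epsInv at h0
      rw [if_neg hc] at h0
      split at h0 <;> simp at h0
    have hse : Even s.val := by
      have := hev 0
      rw [Nat.even_iff] at this ⊢
      omega
    have h2k : 2 * (s.val / 2) = s.val := by
      rw [Nat.even_iff] at hse; omega
    have hx : 2 * ((s.val / 2 : ℕ) : ZMod p) - s = 0 := by
      have : ((2 * (s.val / 2) : ℕ) : ZMod p) = ((s.val : ℕ) : ZMod p) := by rw [h2k]
      push_cast at this
      rw [this, ZMod.natCast_val, ZMod.cast_id, sub_self]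
    have := key ((s.val / 2 : ℕ) : ZMod p)
    rwa [hx] at this
  · intro h1
    have hodd : ∀ i, Odd (cycS hn a i) := by
      unfold epsInv at h1
      split at h1
      · simp at h1
      · split at h1
        · assumption
        · simp at h1
    have hso : ¬ Even s.val := by
      have := hodd 0
      rw [Nat.odd_iff] at this
      rw [Nat.even_iff]
      omega
    have h2k : 2 * ((s.val + 1) / 2) = s.val + 1 := by
      rw [Nat.even_iff] at hso; omega
    have hx : 2 * (((s.val + 1) / 2 : ℕ) : ZMod p) - s = 1 := by
      have : ((2 * ((s.val + 1) / 2) : ℕ) : ZMod p) = ((s.val + 1 : ℕ) : ZMod p) := by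
        rw [h2k]
      push_cast at this
      rw [this, ZMod.natCast_val, ZMod.cast_id]
      ring
    have := key (((s.val + 1) / 2 : ℕ) : ZMod p)
    rwa [hx] at this
end

section
/- Let p ≥ 2 be even, let n be an even positive integer, and let x = (x_1,...,x_n) ∈ Z_p^n satisfy 2·Σ_{i=1}^n (-1)^i x_i = 0 in Z_p. If τ = τ_p^A(x) is even and p/τ is odd, then κ_p^A(x) = Σ_{i=1}^n (-1)^i x_i = 0 in Z_p (rather than p/2). -/
open scoped Classical

lemma sum_neg_one_pow_fin {R : Type*} [Ring R] {n : ℕ} (hne : Even n) :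
    ∑ i : Fin n, (-1 : R) ^ (i.1 + 1) = 0 := by
  rw [Fin.sum_univ_eq_sum_range (fun i => (-1 : R) ^ (i + 1))]
  have : ∑ i ∈ Finset.range n, (-1 : R) ^ (i + 1)
      = -∑ i ∈ Finset.range n, (-1 : R) ^ i := by
    rw [← Finset.sum_neg_distrib]
    refine Finset.sum_congr rfl fun i _ => ?_
    rw [pow_succ, mul_neg_one]
  rw [this, neg_one_geom_sum, if_pos hne, neg_zero]

lemma tauA_mem (p n : ℕ) (hp : 0 < p) (x : Fin n → ZMod p) :
    0 < tauA p n x ∧ tauA p n x ∣ p ∧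
      ∀ i j : Fin n, (x i).val ≡ (x j).val [MOD tauA p n x] := by
  have hne : (1 : ℕ) ∈ {k : ℕ | 0 < k ∧ k ∣ p ∧
      ∀ i j : Fin n, (x i).val ≡ (x j).val [MOD k]} :=
    ⟨one_pos, one_dvd _, fun i j => Nat.modEq_one⟩
  have hbdd : BddAbove {k : ℕ | 0 < k ∧ k ∣ p ∧
      ∀ i j : Fin n, (x i).val ≡ (x j).val [MOD k]} :=
    ⟨p, fun k hk => Nat.le_of_dvd hp hk.2.1⟩
  exact Nat.sSup_mem ⟨1, hne⟩ hbdd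

/-- for even `p`, even `n > 0` and `x ∈ (ZMod p)^n` with
`2·Σ (-1)^i x_i = 0`, if `τ = τ_p^A(x)` is even and `p/τ` is odd, then
`κ_p^A(x) = Σ (-1)^i x_i = 0` in `ZMod p`. -/
theorem kappa_eq_zero_of_beta (p n : ℕ) (hp : 2 ≤ p) (hpe : Even p)
    (hn : 0 < n) (hne : Even n) (x : Fin n → ZMod p)
    (h2 : 2 * altSum p n x = 0)
    (hτe : Even (tauA p n x)) (hqo : Odd (p / tauA p n x)) :
    altSum p n x = 0 := by
  haveI : NeZero p := ⟨by omega⟩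
  set τ := tauA p n x with hτ
  obtain ⟨hτpos, hτdvd, hτcong⟩ := tauA_mem p n (by omega) x
  haveI : NeZero τ := ⟨hτpos.ne'⟩
  -- altSum maps to 0 in ZMod τ
  set a := altSum p n x with ha
  have hcast : ((a.val : ℕ) : ZMod τ) = 0 := by
    have hmap : (ZMod.castHom hτdvd (ZMod τ)) a = 0 := by
      rw [ha, altSum, map_sum]
      have hconst : ∀ i : Fin n,
          (ZMod.castHom hτdvd (ZMod τ)) ((-1 : ZMod p) ^ (i.1 + 1) * x i)
          = (-1 : ZMod τ) ^ (i.1 + 1) * ((x ⟨0, hn⟩).val : ZMod τ) := by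
        intro i
        rw [map_mul, map_pow, map_neg, map_one]
        congr 1
        have : (ZMod.castHom hτdvd (ZMod τ)) (x i) = ((x i).val : ZMod τ) := by
          rw [ZMod.castHom_apply, ← ZMod.natCast_val]
        rw [this, ZMod.natCast_eq_natCast_iff]
        exact hτcong i ⟨0, hn⟩
      rw [Finset.sum_congr rfl fun i _ => hconst i, ← Finset.sum_mul,
        sum_neg_one_pow_fin hne, zero_mul]
    have : (ZMod.castHom hτdvd (ZMod τ)) a = ((a.val : ℕ) : ZMod τ) := by
      rw [ZMod.castHom_apply, ← ZMod.natCast_val]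
    rwa [this] at hmap
  have hτdvdval : τ ∣ a.val := (ZMod.natCast_eq_zero_iff _ _).mp hcast
  -- from 2*a = 0 : a.val = 0 or a.val = p/2
  have h2v : p ∣ 2 * a.val := by
    have : ((2 * a.val : ℕ) : ZMod p) = 0 := by
      push_cast
      rw [ZMod.natCast_val, ZMod.cast_id]
      exact h2
    exact (ZMod.natCast_eq_zero_iff _ _).mp this
  have hvlt : a.val < p := ZMod.val_lt a
  have hcase : a.val = 0 ∨ a.val = p / 2 := by
    obtain ⟨c, hc⟩ := h2v
    obtain ⟨m, hm⟩ := hpe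
    have hc2 : c < 2 := by nlinarith [ZMod.val_lt a]
    interval_cases c
    · left; omega
    · right; omega
  rcases hcase with h0 | hhalf
  · rwa [ZMod.val_eq_zero] at h0
  · exfalso
    -- τ ∣ p/2, τ even, p/τ odd : contradiction
    obtain ⟨q, hq⟩ := hτdvd
    obtain ⟨s, hs⟩ := hτe
    have hqodd : Odd q := by
      have : p / τ = q := by rw [hq]; exact Nat.mul_div_cancel_left q hτpos
      rwa [hτ, this] at hqo
    have hspos : 0 < s := by omega
    have hτdvdhalf : τ ∣ p / 2 := hhalf ▸ hτdvdval
    have hpsq : p = 2 * (s * q) := by rw [hq, ← hτ, hs]; ring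
    have hph : p / 2 = s * q := by omega
    obtain ⟨d, hd⟩ := hτdvdhalf
    rw [hph, hs] at hd
    have hqd : q = 2 * d :=
      Nat.eq_of_mul_eq_mul_left hspos (by rw [hd]; ring)
    obtain ⟨r, hr⟩ := hqodd
    omega
end

section
/- Let p ≥ 2. The alternating set A_p = ⋃_{n even} A_{p,n}, where A_{p,n} = { (a_1,...,a_n) ∈ Z_p^n : a_i = a_1 for all odd i and a_i = a_2 for all even i }, is an R-palette for Dehn p-colorings; that is, A_p is closed under the operations (i)–(iv) in the definition of an R-palette. -/
open scoped Classical

lemma succ_mod_even_parity {n : ℕ} (he : Even n) (i : Fin n) :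
    Even ((i.1 + 1) % n) ↔ ¬ Even i.1 := by
  obtain ⟨m, hm⟩ := he
  have hi := i.2
  rcases Nat.lt_or_ge (i.1 + 1) n with h | h
  · rw [Nat.mod_eq_of_lt h]; simp [Nat.even_iff]; omega
  · have hne : i.1 + 1 = n := by omega
    rw [hne, Nat.mod_self]; simp [Nat.even_iff]; omega

/-- the alternating set `A_p` is an `R`-palette for Dehn
`p`-colorings, i.e. it is closed under the operations (i)–(iv). -/
theorem altSet_isRPalette (p : ℕ) (hp : 2 ≤ p) : IsRPalette p (altSet p) := by
  refine ⟨?_, ?_, ?_, ?_⟩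
  · -- Op1
    rintro n hn a ⟨-, he, x, y, hxy⟩
    replace he : Even n := he
    replace hxy : ∀ i : Fin n, a i = if Even i.1 then x else y := hxy
    refine ⟨hn, he, y, x, fun i : Fin n => ?_⟩
    simp only [dOp1]
    rw [hxy]
    have hpar := succ_mod_even_parity he i
    by_cases h : Even i.1
    · rw [if_neg (fun hc => (hpar.mp hc) h), if_pos h]
    · rw [if_pos (hpar.mpr h), if_neg h]
  · -- Op2
    rintro n hn c a ⟨-, he, x, y, hxy⟩
    replace he : Even n := he
    replace hxy : ∀ i : Fin n, a i = if Even i.1 then x else y := hxy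
    have h0 : a ⟨0, hn⟩ = x := by rw [hxy]; norm_num
    refine ⟨hn, he, c, y + (x - c), fun i : Fin n => ?_⟩
    simp only [dOp2]
    rw [hxy, h0]
    by_cases h : Even i.1
    · have hpow : (-1 : ZMod p) ^ (i.1 + 1) = -1 := Odd.neg_one_pow (Even.add_one h)
      rw [if_pos h, if_pos h, hpow]; ring
    · have hpow : (-1 : ZMod p) ^ (i.1 + 1) = 1 :=
        Even.neg_one_pow (Nat.even_add_one.mpr h)
      rw [if_neg h, if_neg h, hpow]; ring
  · -- Op3
    rintro n hn c a ⟨-, he, x, y, hxy⟩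
    replace he : Even n := he
    replace hxy : ∀ i : Fin n, a i = if Even i.1 then x else y := hxy
    have h0 : a ⟨0, hn⟩ = x := by rw [hxy]; norm_num
    refine ⟨hn, he, c, x - y + c, fun i : Fin n => ?_⟩
    simp only [dOp3]
    rw [h0, hxy]
    by_cases h : Even i.1
    · rw [if_pos h, if_pos h]; ring
    · rw [if_neg h, if_neg h]
  · -- Op4
    rintro n hn a ⟨-, he, x, y, hxy⟩
    replace he : Even n := he
    replace hxy : ∀ i : Fin n, a i = if Even i.1 then x else y := hxy
    have h0 : a ⟨0, by omega⟩ = x := by rw [hxy]; norm_num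
    have h1 : a ⟨1, by omega⟩ = y := by rw [hxy]; norm_num
    have h2 : a ⟨2, hn⟩ = x := by rw [hxy]; norm_num
    refine ⟨(show 0 < n by omega), he, x, y, fun i : Fin n => ?_⟩
    simp only [dOp4]
    by_cases h : i.1 = 1
    · have hodd : ¬ Even i.1 := by simp [h, Nat.even_iff]
      rw [if_pos h, h0, h1, h2, if_neg hodd]; ring
    · rw [if_neg h, hxy]
end
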